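/- arXiv:2112.12184 — 5 statements merged into one kernel-verified Lean document; each statement's English description precedes it below -/
import Mathlib

section
/- For set partitions 𝒜, ℬ of [d] and permutations α, β of [d] with each cycle of α contained in a block of 𝒜 and each cycle of β contained in a block of ℬ, the colength of the product satisfies |(𝒜 ∨ ℬ, α∘β)| ≤ |(𝒜,α)| + |(ℬ,β)|, where 𝒜 ∨ ℬ is the join (smallest common coarsening) of the two partitions. -/
open Equiv

/-- The setoid on `β` whose classes are the supports of the cycles of `α`
(fixed points giving singleton classes); this is the partition `𝟎_α`. -/
def cycleSetoid {β : Type*} (α : Equiv.Perm β) : Setoid β :=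
  ⟨α.SameCycle, ⟨fun x => Equiv.Perm.SameCycle.refl α x, fun h => h.symm, fun h h' => h.trans h'⟩⟩

/-- Number of blocks of a set partition (encoded as a setoid). -/
noncomputable def numBlocks {β : Type*} (s : Setoid β) : ℕ :=
  Nat.card (Quotient s)

/-- Number of cycles of a permutation, counting fixed points as cycles. -/
noncomputable def numCycles {β : Type*} (α : Equiv.Perm β) : ℕ :=
  numBlocks (cycleSetoid α)

/-- The colength `|α| = d - #cycles(α)` of a permutation of `Fin d`. -/
noncomputable def permColength {d : ℕ} (α : Equiv.Perm (Fin d)) : ℕ :=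
  d - numCycles α

/-- A partitioned permutation of `[d]`: a pair `(𝒜, α)` of a set partition `𝒜` of `[d]`
and a permutation `α` of `[d]` such that `𝟎_α ≤ 𝒜`, i.e. every cycle support of `α`
is contained in a block of `𝒜`. -/
structure PartPerm (d : ℕ) where
  part : Setoid (Fin d)
  perm : Equiv.Perm (Fin d)
  refines : ∀ x y : Fin d, perm.SameCycle x y → part.r x y

theorem PartPerm.ext' {d : ℕ} {p q : PartPerm d}
    (h1 : p.part = q.part) (h2 : p.perm = q.perm) : p = q := by
  cases p; cases q; simp_all

/-- Colength `|(𝒜,α)| = 2|𝒜| - |α| = 2(d - #𝒜) - (d - #cycles α)`, as an integer. -/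
noncomputable def pairColength {d : ℕ} (s : Setoid (Fin d)) (σ : Equiv.Perm (Fin d)) : ℤ :=
  2 * ((d : ℤ) - numBlocks s) - ((d : ℤ) - numCycles σ)

noncomputable def PartPerm.colength {d : ℕ} (p : PartPerm d) : ℤ :=
  pairColength p.part p.perm

/-! ### Auxiliary partition-counting lemmas -/

set_option linter.unusedSectionVars false

section PairSetoid

variable {γ : Type*}

/-- The setoid relating only `a` and `b` (and everything to itself). -/
def pairSetoid (a b : γ) : Setoid γ :=
  ⟨fun x y => x = y ∨ (x = a ∧ y = b) ∨ (x = b ∧ y = a), by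
    refine ⟨fun x => Or.inl rfl, ?_, ?_⟩
    · intro x y h; rcases h with rfl | ⟨rfl, rfl⟩ | ⟨rfl, rfl⟩ <;> tauto
    · intro x y z h h'
      rcases h with rfl | ⟨rfl, rfl⟩ | ⟨rfl, rfl⟩ <;>
        rcases h' with rfl | ⟨h1, h2⟩ | ⟨h1, h2⟩ <;> subst_vars <;> tauto⟩

lemma pairSetoid_rel (a b : γ) : (pairSetoid a b) a b := Or.inr (Or.inl ⟨rfl, rfl⟩)

lemma pairSetoid_le {s : Setoid γ} {a b : γ} (h : s a b) : pairSetoid a b ≤ s := by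
  rintro x y (rfl | ⟨rfl, rfl⟩ | ⟨rfl, rfl⟩)
  · exact s.refl' x
  · exact h
  · exact s.symm' h

/-- Explicit description of `s ⊔ pairSetoid a b`. -/
def pairJoin (s : Setoid γ) (a b : γ) : Setoid γ :=
  ⟨fun x y => s x y ∨ (s x a ∧ s b y) ∨ (s x b ∧ s a y), by
    refine ⟨fun x => Or.inl (s.refl' x), ?_, ?_⟩
    · rintro x y (h | ⟨h1, h2⟩ | ⟨h1, h2⟩)
      · exact Or.inl (s.symm' h)
      · exact Or.inr (Or.inr ⟨s.symm' h2, s.symm' h1⟩)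
      · exact Or.inr (Or.inl ⟨s.symm' h2, s.symm' h1⟩)
    · rintro x y z (h | ⟨h1, h2⟩ | ⟨h1, h2⟩) (h' | ⟨h1', h2'⟩ | ⟨h1', h2'⟩)
      · exact Or.inl (s.trans' h h')
      · exact Or.inr (Or.inl ⟨s.trans' h h1', h2'⟩)
      · exact Or.inr (Or.inr ⟨s.trans' h h1', h2'⟩)
      · exact Or.inr (Or.inl ⟨h1, s.trans' h2 h'⟩)
      · exact Or.inl (s.trans' (s.trans' h1 (s.symm' (s.trans' h2 h1'))) h2')
      · exact Or.inl (s.trans' h1 h2')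
      · exact Or.inr (Or.inr ⟨h1, s.trans' h2 h'⟩)
      · exact Or.inl (s.trans' h1 h2')
      · exact Or.inl (s.trans' (s.trans' h1 (s.symm' (s.trans' h2 h1'))) h2')⟩

lemma sup_pair_eq (s : Setoid γ) (a b : γ) : s ⊔ pairSetoid a b = pairJoin s a b := by
  apply le_antisymm
  · apply sup_le
    · exact fun x y h => Or.inl h
    · rintro x y (rfl | ⟨rfl, rfl⟩ | ⟨rfl, rfl⟩)
      · exact Or.inl (s.refl' x)
      · exact Or.inr (Or.inl ⟨s.refl' _, s.refl' _⟩)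
      · exact Or.inr (Or.inr ⟨s.refl' _, s.refl' _⟩)
  · rintro x y (h | ⟨h1, h2⟩ | ⟨h1, h2⟩)
    · exact (le_sup_left : s ≤ s ⊔ pairSetoid a b) h
    · refine Setoid.trans' _ ((le_sup_left : s ≤ s ⊔ pairSetoid a b) h1) ?_
      refine Setoid.trans' _
        ((le_sup_right : pairSetoid a b ≤ s ⊔ pairSetoid a b) (pairSetoid_rel a b)) ?_
      exact (le_sup_left : s ≤ s ⊔ pairSetoid a b) h2
    · refine Setoid.trans' _ ((le_sup_left : s ≤ s ⊔ pairSetoid a b) h1) ?_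
      refine Setoid.trans' _
        ((le_sup_right : pairSetoid a b ≤ s ⊔ pairSetoid a b)
          (Setoid.symm' _ (pairSetoid_rel a b))) ?_
      exact (le_sup_left : s ≤ s ⊔ pairSetoid a b) h2

lemma sup_pair_eq_self {s : Setoid γ} {a b : γ} (h : s a b) : s ⊔ pairSetoid a b = s :=
  sup_eq_left.mpr (pairSetoid_le h)

variable [Finite γ]

lemma numBlocks_le_numBlocks {s t : Setoid γ} (h : s ≤ t) : numBlocks t ≤ numBlocks s :=
  Nat.card_le_card_of_surjective
    (Quotient.map' (fun x => x) fun _ _ hxy => h hxy)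
    (fun q => Quotient.inductionOn' q fun x => ⟨Quotient.mk'' x, rfl⟩)

lemma numBlocks_le_card (s : Setoid γ) : numBlocks s ≤ Nat.card γ :=
  Nat.card_le_card_of_surjective (Quotient.mk s) (fun q => ⟨q.out, Quotient.out_eq q⟩)

lemma numBlocks_lt {s t : Setoid γ} (h : s ≤ t) {a b : γ} (ht : t a b) (hs : ¬ s a b) :
    numBlocks t < numBlocks s := by
  refine lt_of_le_of_ne (numBlocks_le_numBlocks h) fun hEq => ?_
  set f : Quotient s → Quotient t := Quotient.map' (fun x => x) fun _ _ hxy => h hxy with hf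
  have hsurj : Function.Surjective f :=
    fun q => Quotient.inductionOn' q fun x => ⟨Quotient.mk'' x, rfl⟩
  have hbij : Function.Bijective f := hsurj.bijective_of_nat_card_le (le_of_eq hEq.symm)
  have : f (Quotient.mk'' a) = f (Quotient.mk'' b) := Quotient.sound' ht
  exact hs (Quotient.exact' (hbij.1 this))

lemma numBlocks_le_sup_pair_add_one (s : Setoid γ) (a b : γ) :
    numBlocks s ≤ numBlocks (s ⊔ pairSetoid a b) + 1 := by
  classical
  set t := s ⊔ pairSetoid a b with hts
  have hle : s ≤ t := le_sup_left
  set f : Quotient s → Option (Quotient t) :=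
    Quotient.lift (fun x => if s x b then none else some (Quotient.mk t x)) (by
      intro x y hxy
      by_cases hxb : s x b
      · simp [hxb, s.trans' (s.symm' hxy) hxb]
      · have hyb : ¬ s y b := fun hyb => hxb (s.trans' hxy hyb)
        simp only [hxb, hyb, if_false]
        exact congrArg some (Quotient.sound (hle hxy))) with hfdef
  have hinj : Function.Injective f := by
    intro q1 q2
    induction q1 using Quotient.inductionOn with | _ x =>
    induction q2 using Quotient.inductionOn with | _ y =>
    intro hxy
    simp only [hfdef, Quotient.lift_mk] at hxy
    by_cases hxb : s x b <;> by_cases hyb : s y b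
    · exact Quotient.sound (s.trans' hxb (s.symm' hyb))
    · simp [hxb, hyb] at hxy
    · simp [hxb, hyb] at hxy
    · simp only [hxb, hyb, if_false, Option.some.injEq] at hxy
      have := Quotient.exact hxy
      rw [hts, sup_pair_eq] at this
      rcases this with h | ⟨h1, h2⟩ | ⟨h1, h2⟩
      · exact Quotient.sound h
      · exact absurd (s.symm' h2) hyb
      · exact absurd h1 hxb
  haveI := Fintype.ofFinite (Quotient t)
  calc numBlocks s ≤ Nat.card (Option (Quotient t)) := Nat.card_le_card_of_injective f hinj
    _ = numBlocks t + 1 := Finite.card_option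

/-- Joining along a refinement `P ≤ A` costs at least as many block-merges at the level of
`P` as at the level of `A` (semimodularity-type inequality in the partition lattice). -/
lemma factA : ∀ (n : ℕ) (P A C : Setoid γ), numBlocks P = n → P ≤ A →
    (numBlocks A : ℤ) + numBlocks (P ⊔ C) ≤ numBlocks P + numBlocks (A ⊔ C) := by
  intro n
  induction n using Nat.strong_induction_on with
  | _ n ih =>
    intro P A C hn hPA
    by_cases hPA' : P = A
    · subst hPA'; exact le_rfl
    · have hex : ∃ a b, A a b ∧ ¬ P a b := by
        by_contra hcon
        push_neg at hcon
        exact hPA' (le_antisymm hPA fun x y hxy => hcon x y hxy)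
      obtain ⟨a, b, hab, hnab⟩ := hex
      have h2 : P ⊔ pairSetoid a b ≤ A := sup_le hPA (pairSetoid_le hab)
      have h3 : numBlocks (P ⊔ pairSetoid a b) < numBlocks P :=
        numBlocks_lt le_sup_left
          ((le_sup_right : pairSetoid a b ≤ _) (pairSetoid_rel a b)) hnab
      have h4 := ih (numBlocks (P ⊔ pairSetoid a b)) (hn ▸ h3) (P ⊔ pairSetoid a b) A C rfl h2
      have h5 : numBlocks (P ⊔ C) ≤ numBlocks ((P ⊔ pairSetoid a b) ⊔ C) + 1 := by
        rw [sup_right_comm]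
        exact numBlocks_le_sup_pair_add_one (P ⊔ C) a b
      have h3' : (numBlocks (P ⊔ pairSetoid a b) : ℤ) + 1 ≤ numBlocks P := by exact_mod_cast h3
      have h5' : (numBlocks (P ⊔ C) : ℤ) ≤ numBlocks ((P ⊔ pairSetoid a b) ⊔ C) + 1 := by
        exact_mod_cast h5
      linarith

end PairSetoid

/-! ### Auxiliary permutation lemmas -/

section PermAux

variable {γ : Type*} [DecidableEq γ] [Finite γ]

lemma sameCycle_pow_rel (σ ρ : Perm γ) : ∀ (n : ℕ) (x : γ),
    (cycleSetoid σ ⊔ cycleSetoid ρ) x (((σ * ρ) ^ n) x) := by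
  intro n
  induction n with
  | zero => intro x; simp only [pow_zero, Perm.one_apply]; exact Setoid.refl' _ x
  | succ n ihn =>
    intro x
    have h1 : (cycleSetoid σ ⊔ cycleSetoid ρ) (((σ * ρ) ^ n) x) (ρ (((σ * ρ) ^ n) x)) :=
      (le_sup_right : cycleSetoid ρ ≤ _) (⟨1, by simp⟩ : ρ.SameCycle _ _)
    have h2 : (cycleSetoid σ ⊔ cycleSetoid ρ) (ρ (((σ * ρ) ^ n) x))
        (σ (ρ (((σ * ρ) ^ n) x))) :=
      (le_sup_left : cycleSetoid σ ≤ _) (⟨1, by simp⟩ : σ.SameCycle _ _)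
    have : ((σ * ρ) ^ (n + 1)) x = σ (ρ (((σ * ρ) ^ n) x)) := by
      rw [pow_succ', Perm.mul_apply, Perm.mul_apply]
    rw [this]
    exact Setoid.trans' _ (ihn x) (Setoid.trans' _ h1 h2)

lemma cycleSetoid_mul_le (σ ρ : Perm γ) :
    cycleSetoid (σ * ρ) ≤ cycleSetoid σ ⊔ cycleSetoid ρ := by
  intro x y h
  obtain ⟨n, -, -, hn⟩ := Perm.SameCycle.exists_pow_eq'' h
  rw [← hn]
  exact sameCycle_pow_rel σ ρ n x

lemma swap_pow_apply (b c : γ) : ∀ (n : ℕ) (x : γ),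
    ((swap b c) ^ n) x = x ∨ ((swap b c) ^ n) x = swap b c x := by
  intro n
  induction n with
  | zero => intro x; left; simp
  | succ n ihn =>
    intro x
    have : ((swap b c) ^ (n + 1)) x = swap b c (((swap b c) ^ n) x) := by
      rw [pow_succ', Perm.mul_apply]
    rw [this]
    rcases ihn x with h | h
    · right; rw [h]
    · left; rw [h, swap_apply_self]

lemma cycleSetoid_swap_le (b c : γ) : cycleSetoid (swap b c) ≤ pairSetoid b c := by
  intro x y h
  obtain ⟨n, -, -, hn⟩ := Perm.SameCycle.exists_pow_eq'' h
  rcases swap_pow_apply b c n x with h' | h'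
  · rw [← hn, h']
  · rw [← hn, h']
    rcases eq_or_ne x b with rfl | hxb
    · rw [swap_apply_left]; exact pairSetoid_rel _ _
    · rcases eq_or_ne x c with rfl | hxc
      · rw [swap_apply_right]; exact Setoid.symm' _ (pairSetoid_rel _ _)
      · rw [swap_apply_of_ne_of_ne hxb hxc]

/-- If `b, c` are in different cycles of `ρ`, then `ρ * swap b c` connects them. -/
lemma sameCycle_mul_swap_of_not (ρ : Perm γ) {b c : γ} (hbc : b ≠ c)
    (h : ¬ ρ.SameCycle b c) : (ρ * swap b c).SameCycle b c := by
  classical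
  have hex : ∃ n, 0 < n ∧ (ρ ^ n) c = c :=
    ⟨orderOf ρ, orderOf_pos ρ, by rw [pow_orderOf_eq_one]; rfl⟩
  set m := Nat.find hex with hm
  obtain ⟨hm0, hmc⟩ : 0 < m ∧ (ρ ^ m) c = c := Nat.find_spec hex
  have key : ∀ j, j + 1 ≤ m → ((ρ * swap b c) ^ (j + 1)) b = (ρ ^ (j + 1)) c := by
    intro j
    induction j with
    | zero =>
      intro _
      simp [Perm.mul_apply]
    | succ j ihj =>
      intro hj
      have hj' : j + 1 ≤ m := by omega
      have hy := ihj hj'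
      have h1 : (ρ ^ (j + 1)) c ≠ c := by
        intro hcc
        have : m ≤ j + 1 := Nat.find_min' hex ⟨by omega, hcc⟩
        omega
      have h2 : (ρ ^ (j + 1)) c ≠ b := by
        intro hcb
        exact h (Perm.SameCycle.symm ⟨((j : ℤ) + 1), by
          rw [show ((j : ℤ) + 1) = ((j + 1 : ℕ) : ℤ) by push_cast; ring, zpow_natCast]
          exact hcb⟩)
      calc ((ρ * swap b c) ^ (j + 1 + 1)) b
          = (ρ * swap b c) (((ρ * swap b c) ^ (j + 1)) b) := by
            rw [pow_succ', Perm.mul_apply]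
        _ = ρ (swap b c ((ρ ^ (j + 1)) c)) := by rw [hy, Perm.mul_apply]
        _ = ρ ((ρ ^ (j + 1)) c) := by rw [swap_apply_of_ne_of_ne h2 h1]
        _ = (ρ ^ (j + 1 + 1)) c := by conv_rhs => rw [pow_succ', Perm.mul_apply]
  obtain ⟨j, hmj⟩ : ∃ j, m = j + 1 := ⟨m - 1, by omega⟩
  refine ⟨((j : ℤ) + 1), ?_⟩
  rw [show ((j : ℤ) + 1) = ((j + 1 : ℕ) : ℤ) by push_cast; ring, zpow_natCast]
  rw [key j (le_of_eq hmj.symm), ← hmj]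
  exact hmc

/-- If `b, c` are in the same cycle of `ρ`, then `ρ * swap b c` disconnects them. -/
lemma not_sameCycle_mul_swap (ρ : Perm γ) {b c : γ} (hbc : b ≠ c)
    (h : ρ.SameCycle b c) : ¬ (ρ * swap b c).SameCycle b c := by
  classical
  have hex : ∃ n, 0 < n ∧ ((ρ ^ n) b = b ∨ (ρ ^ n) b = c) :=
    ⟨orderOf ρ, orderOf_pos ρ, Or.inl (by rw [pow_orderOf_eq_one]; rfl)⟩
  set k := Nat.find hex with hk
  obtain ⟨hk0, hkbc⟩ : 0 < k ∧ ((ρ ^ k) b = b ∨ (ρ ^ k) b = c) := Nat.find_spec hex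
  have hkc : (ρ ^ k) b = c := by
    rcases hkbc with hb | hc
    · exfalso
      obtain ⟨j, hj0, -, hj⟩ := Perm.SameCycle.exists_pow_eq'' h
      have hper : ∀ q, (ρ ^ (q * k)) b = b := by
        intro q
        induction q with
        | zero => simp
        | succ q ihq =>
          have : (q + 1) * k = q * k + k := by ring
          rw [this, pow_add, Perm.mul_apply, hb, ihq]
      have hmod : (ρ ^ (j % k)) b = c := by
        conv_rhs => rw [← hj]
        conv_rhs => rw [← Nat.mod_add_div j k]
        rw [pow_add, Perm.mul_apply]
        rw [show k * (j / k) = (j / k) * k by ring, hper]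
      have hr0 : j % k ≠ 0 := by
        intro h0
        rw [h0, pow_zero] at hmod
        exact hbc (by simpa using hmod)
      have h1 : k ≤ j % k := Nat.find_min' hex ⟨Nat.pos_of_ne_zero hr0, Or.inr hmod⟩
      have h2 : j % k < k := Nat.mod_lt j hk0
      omega
    · exact hc
  have horb : ∀ n : ℕ, ∃ i, 1 ≤ i ∧ i ≤ k ∧ (((ρ * swap b c) ^ n) c = (ρ ^ i) b) := by
    intro n
    induction n with
    | zero => exact ⟨k, hk0, le_rfl, by simp [hkc]⟩
    | succ n ihn =>
      obtain ⟨i, hi1, hik, hiv⟩ := ihn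
      have hstep : ((ρ * swap b c) ^ (n + 1)) c = (ρ * swap b c) ((ρ ^ i) b) := by
        rw [pow_succ', Perm.mul_apply, hiv]
      by_cases hik' : i = k
      · refine ⟨1, le_rfl, hk0, ?_⟩
        rw [hstep, hik', hkc, Perm.mul_apply, swap_apply_right, pow_one]
      · have hilt : i < k := lt_of_le_of_ne hik hik'
        have hne1 : (ρ ^ i) b ≠ b := fun hh => (Nat.find_min hex hilt) ⟨hi1, Or.inl hh⟩
        have hne2 : (ρ ^ i) b ≠ c := fun hh => (Nat.find_min hex hilt) ⟨hi1, Or.inr hh⟩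
        refine ⟨i + 1, by omega, by omega, ?_⟩
        rw [hstep, Perm.mul_apply, swap_apply_of_ne_of_ne hne1 hne2, pow_succ',
          Perm.mul_apply]
  intro hcon
  obtain ⟨n, -, -, hn⟩ := Perm.SameCycle.exists_pow_eq'' hcon.symm
  obtain ⟨i, hi1, hik, hiv⟩ := horb n
  rw [hn] at hiv
  rcases eq_or_lt_of_le hik with rfl | hilt
  · rw [hkc] at hiv
    exact hbc hiv
  · exact (Nat.find_min hex hilt) ⟨hi1, Or.inl hiv.symm⟩

lemma orbitEq (ρ : Perm γ) (b c : γ) :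
    cycleSetoid (ρ * swap b c) ⊔ pairSetoid b c = cycleSetoid ρ ⊔ pairSetoid b c := by
  apply le_antisymm
  · refine sup_le ?_ le_sup_right
    refine le_trans (cycleSetoid_mul_le ρ (swap b c)) ?_
    exact sup_le le_sup_left (le_trans (cycleSetoid_swap_le b c) le_sup_right)
  · refine sup_le ?_ le_sup_right
    have hρ : ρ = (ρ * swap b c) * swap b c := by
      rw [mul_assoc, swap_mul_self, mul_one]
    calc cycleSetoid ρ = cycleSetoid ((ρ * swap b c) * swap b c) := by rw [← hρ]
      _ ≤ cycleSetoid (ρ * swap b c) ⊔ cycleSetoid (swap b c) := cycleSetoid_mul_le _ _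
      _ ≤ cycleSetoid (ρ * swap b c) ⊔ pairSetoid b c :=
          sup_le le_sup_left (le_trans (cycleSetoid_swap_le b c) le_sup_right)

lemma numCycles_mul_swap_le (ρ : Perm γ) (b c : γ) :
    numCycles (ρ * swap b c) ≤ numCycles ρ + 1 :=
  calc numCycles (ρ * swap b c)
      ≤ numBlocks (cycleSetoid (ρ * swap b c) ⊔ pairSetoid b c) + 1 :=
        numBlocks_le_sup_pair_add_one _ b c
    _ = numBlocks (cycleSetoid ρ ⊔ pairSetoid b c) + 1 := by rw [orbitEq]
    _ ≤ numCycles ρ + 1 := Nat.add_le_add_right (numBlocks_le_numBlocks le_sup_left) 1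

lemma numCycles_mul_swap_add_one_le (ρ : Perm γ) {b c : γ} (hbc : b ≠ c)
    (h : ¬ ρ.SameCycle b c) : numCycles (ρ * swap b c) + 1 ≤ numCycles ρ := by
  have hsc := sameCycle_mul_swap_of_not ρ hbc h
  have h1 : cycleSetoid (ρ * swap b c) ⊔ pairSetoid b c = cycleSetoid (ρ * swap b c) :=
    sup_pair_eq_self hsc
  have h2 : numCycles (ρ * swap b c) = numBlocks (cycleSetoid ρ ⊔ pairSetoid b c) := by
    show numBlocks _ = _
    rw [← h1, orbitEq]
  rw [h2]
  have h3 := numBlocks_lt (le_sup_left : cycleSetoid ρ ≤ cycleSetoid ρ ⊔ pairSetoid b c)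
    ((le_sup_right : pairSetoid b c ≤ _) (pairSetoid_rel b c)) h
  exact h3

lemma numCycles_add_one_le (β : Perm γ) {b : γ} (hb : β b ≠ b) :
    numCycles β + 1 ≤ numCycles (β * swap b (β b)) := by
  have hbc : b ≠ β b := Ne.symm hb
  have hsc : β.SameCycle b (β b) := ⟨1, by simp⟩
  have ht := not_sameCycle_mul_swap β hbc hsc
  have := numCycles_mul_swap_add_one_le (β * swap b (β b)) hbc ht
  rwa [mul_assoc, swap_mul_self, mul_one] at this

end PermAux

/-! ### The one-transposition step and the main induction -/

lemma colength_step (d : ℕ) (D : Setoid (Fin d)) (ρ : Perm (Fin d)) {b c : Fin d} (hbc : b ≠ c)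
    (hle : cycleSetoid ρ ≤ D) :
    pairColength (D ⊔ pairSetoid b c) (ρ * swap b c) ≤ pairColength D ρ + 1 := by
  by_cases hD : D b c
  · rw [sup_pair_eq_self hD]
    have h1 : (numCycles (ρ * swap b c) : ℤ) ≤ numCycles ρ + 1 := by
      exact_mod_cast numCycles_mul_swap_le ρ b c
    unfold pairColength
    linarith
  · have hns : ¬ ρ.SameCycle b c := fun hh => hD (hle hh)
    have h1 : (numCycles (ρ * swap b c) : ℤ) + 1 ≤ numCycles ρ := by
      exact_mod_cast numCycles_mul_swap_add_one_le ρ hbc hns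
    have h2 : (numBlocks D : ℤ) ≤ numBlocks (D ⊔ pairSetoid b c) + 1 := by
      exact_mod_cast numBlocks_le_sup_pair_add_one D b c
    unfold pairColength
    linarith

lemma colength_star (d : ℕ) :
    ∀ (n : ℕ) (β : Perm (Fin d)), β.support.card = n →
      ∀ (C : Setoid (Fin d)) (σ : Perm (Fin d)), cycleSetoid σ ≤ C →
        pairColength (C ⊔ cycleSetoid β) (σ * β) ≤
          pairColength C σ + ((d : ℤ) - numCycles β) := by
  intro n
  induction n using Nat.strong_induction_on with
  | _ n ih =>
    intro β hn C σ hC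
    by_cases hβ : β = 1
    · subst hβ
      have h1 : cycleSetoid (1 : Perm (Fin d)) ≤ C := by
        intro x y h
        have h' : Equiv.Perm.SameCycle 1 x y := h
        rw [Perm.sameCycle_one] at h'
        subst h'
        exact Setoid.refl' _ x
      rw [sup_eq_left.mpr h1, mul_one]
      have h2 : numCycles (1 : Perm (Fin d)) ≤ d := by
        have := numBlocks_le_card (cycleSetoid (1 : Perm (Fin d)))
        rwa [Nat.card_eq_fintype_card, Fintype.card_fin] at this
      have h2' : (numCycles (1 : Perm (Fin d)) : ℤ) ≤ d := by exact_mod_cast h2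
      linarith
    · have hbex : ∃ b, β b ≠ b := by
        by_contra hcon; push_neg at hcon
        exact hβ (Equiv.ext fun x => by rw [hcon x, Perm.one_apply])
      obtain ⟨b, hb⟩ := hbex
      set c := β b with hc
      have hbc : b ≠ c := Ne.symm hb
      set β' := β * swap b c with hβ'
      have hββ' : β = β' * swap b c := by rw [hβ', mul_assoc, swap_mul_self, mul_one]
      have hsupp : β'.support.card < n := by
        have hcsupp : c ∈ β.support := by
          rw [Perm.mem_support]
          intro hcc
          exact hb (β.injective (by rw [hcc, ← hc]))
        have hsub : β'.support ⊆ β.support.erase c := by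
          intro x hx
          rw [Perm.mem_support] at hx
          rw [Finset.mem_erase, Perm.mem_support]
          by_cases hxc : x = c
          · exfalso; apply hx; subst hxc
            rw [hβ', Perm.mul_apply, swap_apply_right, ← hc]
          · refine ⟨hxc, ?_⟩
            by_cases hxb : x = b
            · subst hxb; exact hb
            · intro hfix; apply hx
              rw [hβ', Perm.mul_apply, swap_apply_of_ne_of_ne hxb hxc, hfix]
        calc β'.support.card ≤ (β.support.erase c).card := Finset.card_le_card hsub
          _ < β.support.card := Finset.card_erase_lt_of_mem hcsupp
          _ = n := hn
      have hcost : numCycles β + 1 ≤ numCycles β' := by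
        have := numCycles_add_one_le β hb
        rwa [← hc, ← hβ'] at this
      have hIH := ih _ hsupp β' rfl C σ hC
      have hρ : cycleSetoid (σ * β') ≤ C ⊔ cycleSetoid β' :=
        le_trans (cycleSetoid_mul_le σ β') (sup_le_sup_right hC _)
      have hscβ : (cycleSetoid β) b c := (⟨1, by simp [hc]⟩ : β.SameCycle b c)
      have e1 : cycleSetoid β' ⊔ pairSetoid b c = cycleSetoid β := by
        apply le_antisymm
        · apply sup_le
          · calc cycleSetoid β' = cycleSetoid (β * swap b c) := by rw [hβ']
              _ ≤ cycleSetoid β ⊔ cycleSetoid (swap b c) := cycleSetoid_mul_le _ _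
              _ ≤ cycleSetoid β :=
                  sup_le le_rfl (le_trans (cycleSetoid_swap_le b c) (pairSetoid_le hscβ))
          · exact pairSetoid_le hscβ
        · calc cycleSetoid β = cycleSetoid (β' * swap b c) := by rw [← hββ']
            _ ≤ cycleSetoid β' ⊔ cycleSetoid (swap b c) := cycleSetoid_mul_le _ _
            _ ≤ cycleSetoid β' ⊔ pairSetoid b c :=
                sup_le le_sup_left (le_trans (cycleSetoid_swap_le b c) le_sup_right)
      have hpart : (C ⊔ cycleSetoid β') ⊔ pairSetoid b c = C ⊔ cycleSetoid β := by
        rw [sup_assoc, e1]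
      have hstep := colength_step d (C ⊔ cycleSetoid β') (σ * β') hbc hρ
      have hprod : (σ * β') * swap b c = σ * β := by rw [mul_assoc, ← hββ']
      have hgoal : pairColength (C ⊔ cycleSetoid β) (σ * β) ≤
          pairColength (C ⊔ cycleSetoid β') (σ * β') + 1 := by
        rw [← hpart, ← hprod]; exact hstep
      have hcost' : (numCycles β : ℤ) + 1 ≤ numCycles β' := by exact_mod_cast hcost
      linarith

/-- Subadditivity of colength: `|(𝒜 ∨ ℬ, α∘β)| ≤ |(𝒜,α)| + |(ℬ,β)|`. -/
theorem colength_join_le (d : ℕ) (A B : Setoid (Fin d)) (α β : Equiv.Perm (Fin d))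
    (hA : ∀ x y, α.SameCycle x y → A.r x y)
    (hB : ∀ x y, β.SameCycle x y → B.r x y) :
    pairColength (A ⊔ B) (α * β) ≤ pairColength A α + pairColength B β := by
  have hA' : cycleSetoid α ≤ A := fun x y h => hA x y h
  have hB' : cycleSetoid β ≤ B := fun x y h => hB x y h
  have hstar := colength_star d β.support.card β rfl A α hA'
  have hfact := factA (numBlocks (cycleSetoid β)) (cycleSetoid β) B A rfl hB'
  have hcomm1 : A ⊔ cycleSetoid β = cycleSetoid β ⊔ A := sup_comm _ _
  have hcomm2 : A ⊔ B = B ⊔ A := sup_comm _ _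
  have hnc : (numCycles β : ℤ) = (numBlocks (cycleSetoid β) : ℤ) := rfl
  rw [hcomm1] at hstar
  rw [hcomm2]
  unfold pairColength at *
  linarith
end

section
/- In the monoid algebra R[[ℏ]][PS(d)] of the monoid of partitioned permutations of [d] under the extended multiplication ⊙, the element ζ_ℏ := Σ_{α ∈ S(d)} ℏ^{|α|} (𝟎_α, α) is invertible; consequently the extended Möbius function μ_ℏ with μ_ℏ ⊛ ζ_ℏ = ζ_ℏ ⊛ μ_ℏ = δ exists. -/
open Equiv

/-- Cycle supports of `α∘β` lie in blocks of `𝒜 ∨ ℬ`: closure of partitioned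
permutations under the extended multiplication. -/
theorem refines_mul {d : ℕ} {A B : Setoid (Fin d)} {α β : Equiv.Perm (Fin d)}
    (hA : ∀ x y, α.SameCycle x y → A.r x y) (hB : ∀ x y, β.SameCycle x y → B.r x y) :
    ∀ x y, (α * β).SameCycle x y → (A ⊔ B).r x y := by
  classical
  have hle1 : ∀ x y : Fin d, A.r x y → (A ⊔ B).r x y := fun x y h =>
    Setoid.le_def.mp (le_sup_left : A ≤ A ⊔ B) h
  have hle2 : ∀ x y : Fin d, B.r x y → (A ⊔ B).r x y := fun x y h =>
    Setoid.le_def.mp (le_sup_right : B ≤ A ⊔ B) h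
  have step : ∀ z : Fin d, (A ⊔ B).r z ((α * β) z) := by
    intro z
    refine (A ⊔ B).trans (hle2 z (β z) (hB z (β z) ⟨1, by simp⟩)) ?_
    exact hle1 (β z) (α (β z)) (hA (β z) (α (β z)) ⟨1, by simp⟩)
  have key : ∀ n : ℕ, ∀ z : Fin d, (A ⊔ B).r z (((α * β) ^ n) z) := by
    intro n
    induction n with
    | zero => intro z; simpa using (A ⊔ B).refl z
    | succ n ih =>
      intro z
      have h1 := ih z
      have h2 := step (((α * β) ^ n) z)
      have h3 : ((α * β) ^ (n + 1)) z = (α * β) (((α * β) ^ n) z) := by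
        rw [pow_succ']
        simp [Equiv.Perm.mul_apply]
      rw [h3]
      exact (A ⊔ B).trans h1 h2
  intro x y h
  obtain ⟨i, hi0, _, hi⟩ := Equiv.Perm.SameCycle.exists_pow_eq (α * β) h
  rw [← hi]
  exact key i x

/-- The unit partitioned permutation `(𝟎_id, id)`. -/
def PartPerm.one (d : ℕ) : PartPerm d :=
  ⟨⊥, 1, fun x y h => by
    have hxy : x = y := Equiv.Perm.sameCycle_one.mp h
    subst hxy
    exact (⊥ : Setoid (Fin d)).refl x⟩

/-- The extended multiplication `(𝒜,α) ⊙ (ℬ,β) = (𝒜 ∨ ℬ, α∘β)` of partitioned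
permutations. -/
def PartPerm.mul {d : ℕ} (p q : PartPerm d) : PartPerm d :=
  ⟨p.part ⊔ q.part, p.perm * q.perm, refines_mul p.refines q.refines⟩

instance (d : ℕ) : Monoid (PartPerm d) where
  mul := PartPerm.mul
  one := PartPerm.one d
  mul_assoc p q r := PartPerm.ext' (sup_assoc _ _ _) (mul_assoc _ _ _)
  one_mul p := PartPerm.ext' (bot_sup_eq _) (one_mul _)
  mul_one p := PartPerm.ext' (sup_bot_eq _) (mul_one _)

open scoped Classical in
/-- The extended zeta function `ζ_ℏ = Σ_{α ∈ S(d)} ℏ^{|α|} (𝟎_α, α)`, viewed as an element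
of the monoid algebra `R[[ℏ]][PS(d)]` of the monoid of partitioned permutations of `[d]`. -/
noncomputable def zetaHbar (R : Type*) [CommRing R] (d : ℕ) :
    MonoidAlgebra (PowerSeries R) (PartPerm d) :=
  ∑ α : Equiv.Perm (Fin d),
    MonoidAlgebra.single (⟨cycleSetoid α, α, fun _ _ h => h⟩ : PartPerm d)
      ((PowerSeries.X : PowerSeries R) ^ permColength α)


section Aux

open Equiv Function

noncomputable instance setoidFintype (n : ℕ) : Fintype (Setoid (Fin n)) := by
  classical
  exact Fintype.ofInjective (fun s : Setoid (Fin n) => (s.r : Fin n → Fin n → Prop))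
    (fun s t h => Setoid.ext fun a b => iff_of_eq (congrFun (congrFun h a) b))

noncomputable instance partPermFintype (d : ℕ) : Fintype (PartPerm d) := by
  classical
  exact Fintype.ofInjective (fun p : PartPerm d => (p.part, p.perm))
    (fun p q h => PartPerm.ext' (congrArg Prod.fst h) (congrArg Prod.snd h))

lemma numCycles_le {d : ℕ} (α : Equiv.Perm (Fin d)) : numCycles α ≤ d := by
  have := Nat.card_le_card_of_surjective
    (Quotient.mk (cycleSetoid α)) (fun q => Quot.exists_rep q)
  simpa [numCycles, numBlocks] using this

lemma cycleSetoid_one (d : ℕ) : cycleSetoid (1 : Equiv.Perm (Fin d)) = ⊥ := by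
  refine Setoid.ext fun a b => ?_
  rw [Setoid.bot_def]
  exact Equiv.Perm.sameCycle_one

lemma numCycles_one (d : ℕ) : numCycles (1 : Equiv.Perm (Fin d)) = d := by
  have e : Quotient (cycleSetoid (1 : Equiv.Perm (Fin d))) ≃ Fin d := by
    rw [cycleSetoid_one]
    refine ⟨Quotient.lift id fun a b h => ?_, Quotient.mk _, fun q => ?_, fun x => rfl⟩
    · simpa [Setoid.bot_def] using h
    · obtain ⟨a, rfl⟩ := Quotient.exists_rep q; rfl
  simpa [numCycles, numBlocks] using Nat.card_eq_of_equiv_fin e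

lemma permColength_eq_zero_iff {d : ℕ} {α : Equiv.Perm (Fin d)} :
    permColength α = 0 ↔ α = 1 := by
  classical
  constructor
  · intro h
    have hle : d ≤ numCycles α := Nat.sub_eq_zero_iff_le.mp h
    have hcard : Nat.card (Fin d) ≤ Nat.card (Quotient (cycleSetoid α)) := by
      simpa [numCycles, numBlocks] using hle
    have hbij : Function.Bijective (Quotient.mk (cycleSetoid α)) :=
      Function.Surjective.bijective_of_nat_card_le (fun q => Quot.exists_rep q) hcard
    refine Equiv.ext fun x => ?_
    have hxy : Quotient.mk (cycleSetoid α) (α x) = Quotient.mk (cycleSetoid α) x :=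
      Quotient.sound ((Equiv.Perm.sameCycle_apply_left).mpr (Equiv.Perm.SameCycle.refl α x))
    exact hbij.1 hxy
  · rintro rfl
    simp [permColength, numCycles_one]

/-- The partitioned permutation `(𝟎_α, α)`. -/
def toPP {d : ℕ} (α : Equiv.Perm (Fin d)) : PartPerm d :=
  ⟨cycleSetoid α, α, fun _ _ h => h⟩

lemma toPP_one (d : ℕ) : toPP (1 : Equiv.Perm (Fin d)) = 1 :=
  PartPerm.ext' (cycleSetoid_one d) rfl

end Aux

/-- `ζ_ℏ` is invertible in `R[[ℏ]][PS(d)]`; consequently the extended Möbius function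
`μ_ℏ` with `μ_ℏ ⊛ ζ_ℏ = ζ_ℏ ⊛ μ_ℏ = δ` exists (`1` of the monoid algebra is the delta
function supported at the unit `(𝟎_id, id)`). -/
theorem zetaHbar_isUnit (R : Type*) [CommRing R] (d : ℕ) :
    IsUnit (zetaHbar R d) ∧
      ∃ μ : MonoidAlgebra (PowerSeries R) (PartPerm d),
        μ * zetaHbar R d = 1 ∧ zetaHbar R d * μ = 1 := by
  classical
  set K := PowerSeries R
  set ζ := zetaHbar R d with hζ
  let b : Module.Basis (PartPerm d) K (MonoidAlgebra K (PartPerm d)) := MonoidAlgebra.basis (PartPerm d) K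
  let f := LinearMap.mulLeft K ζ
  set T := LinearMap.toMatrix b b f with hT
  have hζeq : ζ = ∑ α : Equiv.Perm (Fin d),
      MonoidAlgebra.single (toPP α) ((PowerSeries.X : PowerSeries R) ^ permColength α) := rfl
  have hmap : (PowerSeries.constantCoeff (R := R)).mapMatrix T = 1 := by
    ext i j
    have hb : (b j : MonoidAlgebra K (PartPerm d)) = MonoidAlgebra.single j 1 := by
      simp [b, Finsupp.coe_basisSingleOne]
    have hTij : T i j = (ζ * MonoidAlgebra.single j (1 : K)).coeff i := by
      rw [hT, LinearMap.toMatrix_apply, hb]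
      rfl
    have hmul : ζ * MonoidAlgebra.single j (1 : K)
        = ∑ α : Equiv.Perm (Fin d),
            MonoidAlgebra.single (toPP α * j)
              ((PowerSeries.X : PowerSeries R) ^ permColength α) := by
      rw [hζeq, Finset.sum_mul]
      refine Finset.sum_congr rfl fun α _ => ?_
      rw [MonoidAlgebra.single_mul_single, mul_one]
    have happ : T i j = ∑ α : Equiv.Perm (Fin d),
        (if toPP α * j = i then (PowerSeries.X : PowerSeries R) ^ permColength α else 0) := by
      rw [hTij, hmul]
      rw [MonoidAlgebra.coeff_sum, Finsupp.finset_sum_apply]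
      exact Finset.sum_congr rfl fun α _ => Finsupp.single_apply
    rw [RingHom.mapMatrix_apply, Matrix.map_apply, happ, map_sum]
    have hterm : ∀ α : Equiv.Perm (Fin d),
        PowerSeries.constantCoeff (R := R)
          (if toPP α * j = i then (PowerSeries.X : PowerSeries R) ^ permColength α else 0)
        = if α = 1 then (if i = j then (1 : R) else 0) else 0 := by
      intro α
      by_cases hα : α = 1
      · subst hα
        simp only [toPP_one, one_mul, permColength_eq_zero_iff.mpr rfl, pow_zero, map_one,
          if_true]
        by_cases hij : j = i
        · subst hij; simp
        · simp [hij, Ne.symm hij]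
      · have hc : permColength α ≠ 0 := fun h => hα (permColength_eq_zero_iff.mp h)
        by_cases hji : toPP α * j = i
        · simp [hji, map_pow, PowerSeries.constantCoeff_X, zero_pow hc, hα]
        · simp [hji, hα]
    rw [Finset.sum_congr rfl fun α _ => hterm α,
      Finset.sum_ite_eq' Finset.univ (1 : Equiv.Perm (Fin d))
        (fun _ => if i = j then (1 : R) else 0)]
    simp [Matrix.one_apply]
  -- the determinant of T has unit constant coefficient
  have hdet : IsUnit T.det := by
    rw [PowerSeries.isUnit_iff_constantCoeff, RingHom.map_det, hmap, Matrix.det_one]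
    exact isUnit_one
  have hTunit : IsUnit T := (Matrix.isUnit_iff_isUnit_det T).mpr hdet
  have hfunit : IsUnit f := by
    have hfe : (LinearMap.toMatrixAlgEquiv b) f = T := rfl
    have h2 := hTunit.map (LinearMap.toMatrixAlgEquiv b).symm
    rwa [← hfe, AlgEquiv.symm_apply_apply] at h2
  have hbij : Function.Bijective f := (Module.End.isUnit_iff f).mp hfunit
  obtain ⟨x, hx⟩ := hbij.2 1
  have hζx : ζ * x = 1 := hx
  have hxζ : x * ζ = 1 := by
    apply hbij.1
    show ζ * (x * ζ) = ζ * 1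
    rw [← mul_assoc, hζx, one_mul, mul_one]
  exact ⟨⟨⟨ζ, x, hζx, hxζ⟩, rfl⟩, x, hxζ, hζx⟩
end

section
/- If f₁, f₂ : PS(d) → R are multiplicative functions on partitioned permutations of [d], then their extended convolutions commute: f₁ ⊛ f₂ = f₂ ⊛ f₁, where (f₁ ⊛ f₂)(𝒞,γ) = Σ_{(𝒜,α)⊙(ℬ,β)=(𝒞,γ)} f₁(𝒜,α) f₂(ℬ,β). -/
open Equiv

instance {d : ℕ} : Finite (Setoid (Fin d)) :=
  Finite.of_injective (fun s => s.r) (fun s t h => by cases s; cases t; simp_all)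

instance {d : ℕ} : Finite (PartPerm d) :=
  Finite.of_injective (fun p => (p.part, p.perm))
    (fun p q h => PartPerm.ext' (congrArg Prod.fst h) (congrArg Prod.snd h))

/-- The cycle type of a permutation of a finite type, including fixed points
as cycles of length `1`; as a multiset, this is a partition of the cardinality. -/
noncomputable def fullCycleType {β : Type*} [Finite β] (α : Equiv.Perm β) : Multiset ℕ :=
  letI := Fintype.ofFinite β
  letI := Classical.decEq β
  Multiset.replicate (Nat.card β - α.cycleType.sum) 1 + α.cycleType

/-- Each block of a partitioned permutation is invariant under the permutation, which
therefore restricts to a permutation `α|_A` of the block. -/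
def blockPerm {d : ℕ} (p : PartPerm d) (c : Quotient p.part) :
    Equiv.Perm {x : Fin d // Quotient.mk p.part x = c} :=
  p.perm.subtypePerm (by
    intro x
    have h : p.part.r x (p.perm x) := p.refines x (p.perm x) ⟨1, by simp⟩
    have h' : Quotient.mk p.part x = Quotient.mk p.part (p.perm x) := Quotient.sound h
    constructor <;> intro hx <;> simp_all)

/-- A function on partitioned permutations of `[d]` is multiplicative if it is of the
form `f(𝒜,α) = Π_{A ∈ 𝒜} g(λ(α|_A))` where `g` is a function of the cycle type only
(this encodes that `f(𝟏_d,σ)` depends only on the conjugacy class of `σ`, together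
with the factorisation over blocks). -/
def IsMultiplicativeFn {R : Type*} [CommRing R] {d : ℕ} (f : PartPerm d → R) : Prop :=
  ∃ g : Multiset ℕ → R, ∀ p : PartPerm d,
    f p = ∏ᶠ c : Quotient p.part, g (fullCycleType (blockPerm p c))

/-- The extended convolution `(f₁ ⊛ f₂)(𝒞,γ) = Σ_{(𝒜,α)⊙(ℬ,β)=(𝒞,γ)} f₁(𝒜,α) f₂(ℬ,β)`. -/
noncomputable def extConv {R : Type*} [CommRing R] {d : ℕ} (f g : PartPerm d → R) :
    PartPerm d → R :=
  open scoped Classical in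
  fun c => ∑ᶠ q : PartPerm d × PartPerm d,
    if q.1.mul q.2 = c then f q.1 * g q.2 else 0


section Aux

open Equiv

theorem cycleType_permCongr' {β γ : Type*} [Fintype β] [DecidableEq β] [Fintype γ]
    [DecidableEq γ] (e : β ≃ γ) (π : Equiv.Perm β) :
    (e.permCongr π).cycleType = π.cycleType := by
  classical
  have h : e.permCongr π =
      π.extendDomain (e.trans (Equiv.subtypeUnivEquiv (fun _ : γ => trivial)).symm) := by
    ext x
    rw [Equiv.Perm.extendDomain_apply_subtype _ _ (trivial : (fun _ : γ => True) x)]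
    simp [Equiv.permCongr_apply]
  rw [h, Equiv.Perm.cycleType_extendDomain]

theorem fullCycleType_permCongr {β γ : Type*} [Finite β] [Finite γ] (e : β ≃ γ) (π : Equiv.Perm β) :
    fullCycleType (e.permCongr π) = fullCycleType π := by
  unfold fullCycleType
  letI : Fintype β := Fintype.ofFinite β
  letI : Fintype γ := Fintype.ofFinite γ
  letI : DecidableEq β := Classical.decEq β
  letI : DecidableEq γ := Classical.decEq γ
  rw [cycleType_permCongr' e π, Nat.card_congr e]

/-- Conjugation of a partitioned permutation: `(𝒜,α) ↦ (σ⁻¹𝒜σ, σ⁻¹ασ)`. -/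
def PartPerm.conjBy {d : ℕ} (p : PartPerm d) (σ : Equiv.Perm (Fin d)) : PartPerm d :=
  ⟨Setoid.comap σ p.part, σ⁻¹ * p.perm * σ, by
    intro x y h
    have h' : p.perm.SameCycle (σ x) (σ y) := by
      have := (Equiv.Perm.sameCycle_conj (g := σ⁻¹) (f := p.perm)).mp (by
        simpa [mul_assoc] using h)
      simpa using this
    exact p.refines _ _ h'⟩

theorem PartPerm.conjBy_conjBy {d : ℕ} (p : PartPerm d) (σ τ : Equiv.Perm (Fin d)) :
    (p.conjBy σ).conjBy τ = p.conjBy (σ * τ) := by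
  refine PartPerm.ext' ?_ ?_
  · refine Setoid.ext fun x y => ?_
    exact Iff.rfl
  · simp [PartPerm.conjBy, mul_assoc]

theorem PartPerm.conjBy_one {d : ℕ} (p : PartPerm d) : p.conjBy 1 = p := by
  refine PartPerm.ext' ?_ ?_
  · exact Setoid.ext fun x y => Iff.rfl
  · simp [PartPerm.conjBy]

theorem sup_comap_eq {d : ℕ} (A B : Setoid (Fin d)) (σ : Equiv.Perm (Fin d))
    (hB : ∀ x, B.r x (σ x)) : B ⊔ Setoid.comap σ A = A ⊔ B := by
  have l1 : ∀ x y : Fin d, A.r x y → (A ⊔ B).r x y := fun x y h =>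
    Setoid.le_def.mp (le_sup_left : A ≤ A ⊔ B) h
  have l2 : ∀ x y : Fin d, B.r x y → (A ⊔ B).r x y := fun x y h =>
    Setoid.le_def.mp (le_sup_right : B ≤ A ⊔ B) h
  have r1 : ∀ x y : Fin d, B.r x y → (B ⊔ Setoid.comap σ A).r x y := fun x y h =>
    Setoid.le_def.mp (le_sup_left : B ≤ _) h
  have r2 : ∀ x y : Fin d, (Setoid.comap σ A).r x y → (B ⊔ Setoid.comap σ A).r x y :=
    fun x y h => Setoid.le_def.mp (le_sup_right : Setoid.comap σ A ≤ _) h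
  apply le_antisymm
  · refine sup_le ?_ ?_
    · exact le_sup_right
    · intro x y h
      have hA : A.r (σ x) (σ y) := h
      exact (A ⊔ B).trans (l2 x (σ x) (hB x))
        ((A ⊔ B).trans (l1 (σ x) (σ y) hA) (l2 (σ y) y (B.symm (hB y))))
  · refine sup_le ?_ ?_
    · intro x y h
      have h1 : B.r x (σ.symm x) := B.symm (by simpa using hB (σ.symm x))
      have h2 : B.r (σ.symm y) y := by simpa using hB (σ.symm y)
      have hm : (Setoid.comap σ A).r (σ.symm x) (σ.symm y) := by
        show A.r (σ (σ.symm x)) (σ (σ.symm y))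
        simpa using h
      refine (B ⊔ Setoid.comap σ A).trans (r1 x (σ.symm x) h1) ?_
      refine (B ⊔ Setoid.comap σ A).trans (r2 _ _ hm) (r1 (σ.symm y) y h2)
    · exact le_sup_left

theorem mul_conjBy {d : ℕ} (p q : PartPerm d) :
    q.mul (p.conjBy q.perm) = p.mul q := by
  refine PartPerm.ext' ?_ ?_
  · show q.part ⊔ Setoid.comap q.perm p.part = p.part ⊔ q.part
    exact sup_comap_eq p.part q.part q.perm
      (fun x => q.refines x (q.perm x) ⟨1, by simp⟩)
  · show q.perm * (q.perm⁻¹ * p.perm * q.perm) = p.perm * q.perm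
    group

theorem multiplicative_conjBy {R : Type*} [CommRing R] {d : ℕ} {f : PartPerm d → R}
    (hf : IsMultiplicativeFn f) (p : PartPerm d) (σ : Equiv.Perm (Fin d)) :
    f (p.conjBy σ) = f p := by
  obtain ⟨g, hg⟩ := hf
  rw [hg, hg]
  set p' := p.conjBy σ with hp'
  have hrel : ∀ a b : Fin d, p'.part.r a b ↔ p.part.r (σ a) (σ b) := fun a b => Iff.rfl
  let E : Quotient p'.part ≃ Quotient p.part := Quotient.congr σ hrel
  have hE : ∀ x : Fin d, E (Quotient.mk p'.part x) = Quotient.mk p.part (σ x) := fun x => rfl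
  have key : ∀ c : Quotient p'.part,
      g (fullCycleType (blockPerm p (E c))) = g (fullCycleType (blockPerm p' c)) := by
    intro c
    have hiff : ∀ x : Fin d, Quotient.mk p'.part x = c ↔ Quotient.mk p.part (σ x) = E c := by
      intro x
      constructor
      · intro h; rw [← hE x, h]
      · intro h; apply E.injective; rw [hE x, h]
    let ec : {x : Fin d // Quotient.mk p'.part x = c} ≃
        {y : Fin d // Quotient.mk p.part y = E c} :=
      Equiv.subtypeEquiv σ hiff
    have hperm : blockPerm p (E c) = ec.permCongr (blockPerm p' c) := by
      ext y
      have : (ec.permCongr (blockPerm p' c) y : Fin d)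
          = σ ((σ⁻¹ * p.perm * σ) (σ.symm (y : Fin d))) := rfl
      rw [this]
      simp [blockPerm, Equiv.Perm.mul_apply]
    rw [hperm, fullCycleType_permCongr]
  calc ∏ᶠ c : Quotient p'.part, g (fullCycleType (blockPerm p' c))
      = ∏ᶠ c : Quotient p'.part, g (fullCycleType (blockPerm p (E c))) := by
        exact finprod_congr fun c => (key c).symm
    _ = ∏ᶠ c' : Quotient p.part, g (fullCycleType (blockPerm p c')) :=
        finprod_comp_equiv E (f := fun c' => g (fullCycleType (blockPerm p c')))

end Aux

/-- Extended convolutions of multiplicative functions commute: `f₁ ⊛ f₂ = f₂ ⊛ f₁`. -/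
theorem extConv_comm_of_multiplicative {R : Type*} [CommRing R] {d : ℕ}
    (f₁ f₂ : PartPerm d → R)
    (h₁ : IsMultiplicativeFn f₁) (h₂ : IsMultiplicativeFn f₂) :
    extConv f₁ f₂ = extConv f₂ f₁ := by
  classical
  funext c
  let Phi : PartPerm d × PartPerm d ≃ PartPerm d × PartPerm d :=
    { toFun := fun x => (x.2, x.1.conjBy x.2.perm)
      invFun := fun x => (x.2.conjBy x.1.perm⁻¹, x.1)
      left_inv := by
        rintro ⟨p, q⟩
        simp [PartPerm.conjBy_conjBy, PartPerm.conjBy_one]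
      right_inv := by
        rintro ⟨q, r⟩
        simp [PartPerm.conjBy_conjBy, PartPerm.conjBy_one] }
  show extConv f₁ f₂ c = extConv f₂ f₁ c
  unfold extConv
  rw [← finsum_comp_equiv Phi
    (f := fun q : PartPerm d × PartPerm d => if q.1.mul q.2 = c then f₂ q.1 * f₁ q.2 else 0)]
  refine finsum_congr fun x => ?_
  obtain ⟨p, q⟩ := x
  have h1 : q.mul (p.conjBy q.perm) = p.mul q := mul_conjBy p q
  have h2 : f₁ (p.conjBy q.perm) = f₁ p := multiplicative_conjBy h₁ p q.perm
  simp only [Phi, Equiv.coe_fn_mk, h1, h2]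
  by_cases hc : p.mul q = c
  · simp [hc, mul_comm]
  · simp [hc]
end

section
/- Symmetric polynomials in the Jucys–Murphy elements J₂,…,J_d, where J_k = Σ_{i<k} (i k) in the group algebra ℚS(d), belong to the center of ℚS(d). -/
open Equiv

/-- The Jucys–Murphy element `J_k = Σ_{i<k} (i k)` in the group algebra, for
`k = j + 2` with `j : Fin (d-1)` (so `k` ranges over `2, …, d`). -/
noncomputable def jucysMurphy (R : Type*) [CommRing R] (d : ℕ) (j : Fin (d - 1)) :
    MonoidAlgebra R (Equiv.Perm (Fin d)) :=
  ∑ i : Fin (j.val + 1),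
    MonoidAlgebra.of R (Equiv.Perm (Fin d))
      (Equiv.swap (⟨i.val, by have := i.2; have := j.2; omega⟩ : Fin d)
        (⟨j.val + 1, by have := j.2; omega⟩ : Fin d))

section TwoVar
variable {R : Type*} [Ring R]

private lemma pow_recur {x y : R} (hxy : x * y = y * x) (k : ℕ) :
    x ^ (k + 2) + y ^ (k + 2)
      = (x + y) * (x ^ (k + 1) + y ^ (k + 1)) - x * y * (x ^ k + y ^ k) := by
  have e1 : x * y ^ (k + 1) = x * y * y ^ k := by rw [pow_succ', ← mul_assoc]
  have e2 : y * x ^ (k + 1) = x * y * x ^ k := by rw [pow_succ', ← mul_assoc, hxy]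
  have e3 : x * x ^ (k + 1) = x ^ (k + 2) := (pow_succ' x (k + 1)).symm
  have e4 : y * y ^ (k + 1) = y ^ (k + 2) := (pow_succ' y (k + 1)).symm
  rw [add_mul, mul_add, mul_add, mul_add, e1, e2, e3, e4]
  abel

lemma two_var_psum {a b a' b' : R} (hab : a * b = b * a) (hab' : a' * b' = b' * a')
    (h1 : a + b = a' + b') (h2 : a * b = a' * b') : ∀ k : ℕ, a ^ k + b ^ k = a' ^ k + b' ^ k := by
  intro k
  induction k using Nat.twoStepInduction with
  | zero => simp
  | one => simpa using h1
  | more k ih1 ih2 =>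
    rw [pow_recur hab, pow_recur hab', h1, h2, ih1, ih2]

lemma two_var {a b a' b' : R} (hab : a * b = b * a) (hab' : a' * b' = b' * a')
    (h1 : a + b = a' + b') (h2 : a * b = a' * b') (p q : ℕ) :
    a ^ p * b ^ q + a ^ q * b ^ p = a' ^ p * b' ^ q + a' ^ q * b' ^ p := by
  induction q generalizing p with
  | zero => simpa using two_var_psum hab hab' h1 h2 p
  | succ q ih =>
    cases p with
    | zero => simpa [add_comm] using two_var_psum hab hab' h1 h2 (q + 1)
    | succ p =>
      have l : ∀ (x y : R), x * y = y * x →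
          x ^ (p + 1) * y ^ (q + 1) = (x * y) * (x ^ p * y ^ q) := by
        intro x y hxy
        have hc : Commute x y := hxy
        calc x ^ (p + 1) * y ^ (q + 1) = x * x ^ p * (y * y ^ q) := by
              rw [pow_succ', pow_succ']
          _ = x * (x ^ p * y) * y ^ q := by rw [mul_assoc, mul_assoc, mul_assoc]
          _ = x * (y * x ^ p) * y ^ q := by rw [(hc.pow_left p).eq]
          _ = (x * y) * (x ^ p * y ^ q) := by rw [mul_assoc, mul_assoc, mul_assoc]
      have l' : ∀ (x y : R), x * y = y * x →
          x ^ (q + 1) * y ^ (p + 1) = (x * y) * (x ^ q * y ^ p) := by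
        intro x y hxy
        have hc : Commute x y := hxy
        calc x ^ (q + 1) * y ^ (p + 1) = x * x ^ q * (y * y ^ p) := by
              rw [pow_succ', pow_succ']
          _ = x * (x ^ q * y) * y ^ p := by rw [mul_assoc, mul_assoc, mul_assoc]
          _ = x * (y * x ^ q) * y ^ p := by rw [(hc.pow_left q).eq]
          _ = (x * y) * (x ^ q * y ^ p) := by rw [mul_assoc, mul_assoc, mul_assoc]
      rw [l a b hab, l' a b hab, l a' b' hab', l' a' b' hab', ← mul_add, ← mul_add, h2, ih p]

end TwoVar

namespace JMaux

open MonoidAlgebra Finset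

variable {n : ℕ}

local notation "G" => Equiv.Perm (Fin (n + 1))
local notation "A" => MonoidAlgebra ℚ (Equiv.Perm (Fin (n + 1)))

noncomputable def X (j : Fin n) : MonoidAlgebra ℚ (Equiv.Perm (Fin (n + 1))) :=
  jucysMurphy ℚ (n + 1) j

lemma X_def (j : Fin n) :
    X j = ∑ i : Fin (j.val + 1),
      MonoidAlgebra.of ℚ G
        (Equiv.swap (⟨i.val, by omega⟩ : Fin (n + 1)) (⟨j.val + 1, by omega⟩ : Fin (n + 1))) :=
  rfl

/-- L0 : if `g` fixes `j+1` and preserves `{0,…,j}`, then `of g` commutes with `X j`. -/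
lemma of_mul_X (j : Fin n) (g : G)
    (h1 : g (⟨j.val + 1, by omega⟩ : Fin (n + 1)) = (⟨j.val + 1, by omega⟩ : Fin (n + 1)))
    (h2 : ∀ x : Fin (n + 1), x.val ≤ j.val → (g x).val ≤ j.val) :
    MonoidAlgebra.of ℚ G g * X j = X j * MonoidAlgebra.of ℚ G g := by
  rw [X_def, Finset.mul_sum, Finset.sum_mul]
  simp_rw [← map_mul]
  have key : ∀ x : Fin (n + 1),
      g * Equiv.swap x (⟨j.val + 1, by omega⟩ : Fin (n + 1))
        = Equiv.swap (g x) (⟨j.val + 1, by omega⟩ : Fin (n + 1)) * g := by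
    intro x
    have h := Equiv.swap_apply_apply g x (⟨j.val + 1, by omega⟩ : Fin (n + 1))
    rw [h1] at h
    rw [h, mul_assoc, mul_assoc, inv_mul_cancel, mul_one]
  simp_rw [key]
  simp_rw [map_mul]
  rw [← Finset.sum_mul, ← Finset.sum_mul]
  congr 1
  -- reindex the sum via the bijection induced by g on {0, …, j}
  set gg : Fin (j.val + 1) → Fin (j.val + 1) := fun i =>
    ⟨(g ⟨i.val, by omega⟩).val, by
      have := h2 ⟨i.val, by omega⟩ (by simpa using Nat.lt_succ_iff.mp i.2); omega⟩ with hgg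
  have hinj : Function.Injective gg := by
    intro i1 i2 h12
    have : (⟨i1.val, by omega⟩ : Fin (n + 1)) = ⟨i2.val, by omega⟩ := by
      apply g.injective
      apply Fin.ext
      simpa [hgg] using congrArg Fin.val h12
    exact Fin.ext (by simpa using congrArg Fin.val this)
  have hbij := Finite.injective_iff_bijective.mp hinj
  refine Fintype.sum_bijective gg hbij
    (fun i => MonoidAlgebra.of ℚ G
      (Equiv.swap (g (⟨i.val, by omega⟩ : Fin (n + 1))) (⟨j.val + 1, by omega⟩ : Fin (n + 1))))
    (fun i => MonoidAlgebra.of ℚ G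
      (Equiv.swap (⟨i.val, by omega⟩ : Fin (n + 1)) (⟨j.val + 1, by omega⟩ : Fin (n + 1))))
    (fun i => rfl)

/-- Commutativity of the Jucys–Murphy elements. -/
lemma X_comm (i j : Fin n) : X i * X j = X j * X i := by
  -- reduce to the case i < j
  have main : ∀ i j : Fin n, i.val < j.val → X i * X j = X j * X i := by
    intro i j hij
    rw [X_def i, Finset.sum_mul, Finset.mul_sum]
    refine Finset.sum_congr rfl (fun c _ => ?_)
    have h1 : Equiv.swap (⟨c.val, by omega⟩ : Fin (n + 1)) (⟨i.val + 1, by omega⟩ : Fin (n + 1))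
        (⟨j.val + 1, by omega⟩ : Fin (n + 1)) = (⟨j.val + 1, by omega⟩ : Fin (n + 1)) := by
      rw [Equiv.swap_apply_of_ne_of_ne] <;> · apply Fin.ne_of_val_ne; simp; omega
    have h2 : ∀ x : Fin (n + 1), x.val ≤ j.val →
        ((Equiv.swap (⟨c.val, by omega⟩ : Fin (n + 1)) (⟨i.val + 1, by omega⟩ : Fin (n + 1))) x).val
          ≤ j.val := by
      intro x hx
      rw [Equiv.swap_apply_def]
      split_ifs <;> first | omega | (simp; omega)
    exact of_mul_X j _ h1 h2
  rcases lt_trichotomy i.val j.val with h | h | h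
  · exact main i j h
  · rw [Fin.ext h]
  · exact (main j i h).symm

/-- Conjugation by a group element, as an algebra automorphism of the group algebra. -/
noncomputable def cj (g : G) :
    MonoidAlgebra ℚ (Equiv.Perm (Fin (n + 1))) ≃ₐ[ℚ] MonoidAlgebra ℚ (Equiv.Perm (Fin (n + 1))) :=
  MonoidAlgebra.domCongr ℚ ℚ (MulAut.conj g)

lemma cj_of (g h : G) :
    cj g (MonoidAlgebra.of ℚ G h) = MonoidAlgebra.of ℚ G (g * h * g⁻¹) := by
  rw [MonoidAlgebra.of_apply, MonoidAlgebra.of_apply]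
  rw [show cj (n := n) g = MonoidAlgebra.domCongr ℚ ℚ (MulAut.conj g) from rfl,
    MonoidAlgebra.domCongr_single, MulAut.conj_apply]

lemma cj_eq (g : G) (x : MonoidAlgebra ℚ (Equiv.Perm (Fin (n + 1)))) :
    cj g x = MonoidAlgebra.of ℚ G g * x * MonoidAlgebra.of ℚ G g⁻¹ := by
  induction x using MonoidAlgebra.induction_on with
  | of h => rw [cj_of]; simp [map_mul]
  | add f f' hf hf' => rw [map_add, hf, hf', mul_add, add_mul]
  | smul r f hf => rw [map_smul, hf, mul_smul_comm, smul_mul_assoc]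

lemma cj_fix_of_comm {g : G} {x : MonoidAlgebra ℚ (Equiv.Perm (Fin (n + 1)))}
    (h : MonoidAlgebra.of ℚ G g * x = x * MonoidAlgebra.of ℚ G g) : cj g x = x := by
  rw [cj_eq, h, mul_assoc, ← map_mul, mul_inv_cancel, map_one, mul_one]

lemma comm_of_cj_fix {g : G} {x : MonoidAlgebra ℚ (Equiv.Perm (Fin (n + 1)))}
    (h : cj g x = x) : MonoidAlgebra.of ℚ G g * x = x * MonoidAlgebra.of ℚ G g := by
  have h' : MonoidAlgebra.of ℚ G g * x * MonoidAlgebra.of ℚ G g⁻¹ = x := by rw [← cj_eq, h]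
  calc MonoidAlgebra.of ℚ G g * x
      = MonoidAlgebra.of ℚ G g * x * (MonoidAlgebra.of ℚ G g⁻¹ * MonoidAlgebra.of ℚ G g) := by
        rw [← map_mul, inv_mul_cancel, map_one, mul_one]
    _ = (MonoidAlgebra.of ℚ G g * x * MonoidAlgebra.of ℚ G g⁻¹) * MonoidAlgebra.of ℚ G g := by
        rw [mul_assoc, mul_assoc, mul_assoc]
    _ = x * MonoidAlgebra.of ℚ G g := by rw [h']

lemma X_def' (j : Fin n) (k : ℕ) (hk : k = j.val + 1) :
    X j = ∑ i : Fin k,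
      MonoidAlgebra.of ℚ G
        (Equiv.swap (⟨i.val, by omega⟩ : Fin (n + 1)) (⟨k, by omega⟩ : Fin (n + 1))) := by
  subst hk; exact X_def j

/-- `cj s` fixes `X j` when the adjacent swap `s = (a, a+1)` does not touch the point `j+1`. -/
lemma cj_X_fix (a : Fin n) (j : Fin n) (hj1 : j.val + 1 ≠ a.val) (hj2 : j.val ≠ a.val) :
    cj (Equiv.swap a.castSucc a.succ) (X j) = X j := by
  apply cj_fix_of_comm
  apply of_mul_X
  · rw [Equiv.swap_apply_of_ne_of_ne] <;> (apply Fin.ne_of_val_ne; simp; omega)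
  · intro x hx
    rw [Equiv.swap_apply_def]
    split_ifs with hA hB
    · have := congrArg Fin.val hA
      simp at this ⊢
      omega
    · have := congrArg Fin.val hB
      simp at this ⊢
      omega
    · exact hx

/-- `cj s (X u) = X v - S` where `s = (a, a+1)`, `u = a-1`, `v = a` (variable indices). -/
lemma cj_X_u (a : Fin n) (ha : 0 < a.val) :
    cj (Equiv.swap a.castSucc a.succ) (X ⟨a.val - 1, by omega⟩)
      = X a - MonoidAlgebra.of ℚ G (Equiv.swap a.castSucc a.succ) := by
  rw [X_def' (⟨a.val - 1, by omega⟩ : Fin n) a.val (by simp; omega), map_sum,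
    X_def' a (a.val + 1) rfl, Fin.sum_univ_castSucc]
  have hlast : (Equiv.swap (⟨((Fin.last a.val).val : ℕ), by omega⟩ : Fin (n + 1))
      (⟨a.val + 1, by omega⟩ : Fin (n + 1))) = Equiv.swap a.castSucc a.succ := by
    rw [show (⟨((Fin.last a.val).val : ℕ), by omega⟩ : Fin (n + 1)) = a.castSucc from
        Fin.ext (by simp),
      show (⟨a.val + 1, by omega⟩ : Fin (n + 1)) = a.succ from Fin.ext (by simp)]
  rw [hlast, add_sub_cancel_right]
  refine Finset.sum_congr rfl (fun i _ => ?_)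
  rw [show (⟨((i.castSucc : Fin (a.val + 1)).val : ℕ), by omega⟩ : Fin (n + 1))
      = (⟨(i.val : ℕ), by omega⟩ : Fin (n + 1)) from Fin.ext (by simp)]
  rw [cj_of, ← Equiv.swap_apply_apply]
  have h1 : Equiv.swap a.castSucc a.succ (⟨i.val, by omega⟩ : Fin (n + 1))
      = (⟨i.val, by omega⟩ : Fin (n + 1)) := by
    rw [Equiv.swap_apply_of_ne_of_ne] <;> (apply Fin.ne_of_val_ne; simp; omega)
  have h2 : Equiv.swap a.castSucc a.succ (⟨a.val, by omega⟩ : Fin (n + 1))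
      = (⟨a.val + 1, by omega⟩ : Fin (n + 1)) := by
    rw [show (⟨a.val, by omega⟩ : Fin (n + 1)) = a.castSucc from Fin.ext (by simp),
      Equiv.swap_apply_left]
    exact Fin.ext (by simp)
  rw [h1, h2]

/-- `cj s (X v) = X u + S` where `s = (a, a+1)`, `u = a-1`, `v = a`. -/
lemma cj_X_v (a : Fin n) (ha : 0 < a.val) :
    cj (Equiv.swap a.castSucc a.succ) (X a)
      = X ⟨a.val - 1, by omega⟩ + MonoidAlgebra.of ℚ G (Equiv.swap a.castSucc a.succ) := by
  rw [X_def' a (a.val + 1) rfl, map_sum, Fin.sum_univ_castSucc,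
    X_def' (⟨a.val - 1, by omega⟩ : Fin n) a.val (by simp; omega)]
  congr 1
  · refine Finset.sum_congr rfl (fun i _ => ?_)
    rw [show (⟨((i.castSucc : Fin (a.val + 1)).val : ℕ), by omega⟩ : Fin (n + 1))
        = (⟨(i.val : ℕ), by omega⟩ : Fin (n + 1)) from Fin.ext (by simp)]
    rw [cj_of, ← Equiv.swap_apply_apply]
    have h1 : Equiv.swap a.castSucc a.succ (⟨i.val, by omega⟩ : Fin (n + 1))
        = (⟨i.val, by omega⟩ : Fin (n + 1)) := by
      rw [Equiv.swap_apply_of_ne_of_ne] <;> (apply Fin.ne_of_val_ne; simp; omega)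
    have h2 : Equiv.swap a.castSucc a.succ (⟨a.val + 1, by omega⟩ : Fin (n + 1))
        = (⟨a.val, by omega⟩ : Fin (n + 1)) := by
      rw [show (⟨a.val + 1, by omega⟩ : Fin (n + 1)) = a.succ from Fin.ext (by simp),
        Equiv.swap_apply_right]
      exact Fin.ext (by simp)
    rw [h1, h2]
  · have hs : (Equiv.swap (⟨((Fin.last a.val).val : ℕ), by omega⟩ : Fin (n + 1))
        (⟨a.val + 1, by omega⟩ : Fin (n + 1))) = Equiv.swap a.castSucc a.succ := by
      rw [show (⟨((Fin.last a.val).val : ℕ), by omega⟩ : Fin (n + 1)) = a.castSucc from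
          Fin.ext (by simp),
        show (⟨a.val + 1, by omega⟩ : Fin (n + 1)) = a.succ from Fin.ext (by simp)]
    rw [hs, cj_of]
    congr 1
    rw [show (Equiv.swap a.castSucc a.succ)⁻¹ = Equiv.swap a.castSucc a.succ from
      Equiv.swap_inv _ _]
    rw [mul_assoc, Equiv.swap_mul_self, mul_one]

/-- For `a = 0`, conjugation fixes every `X j`. -/
lemma cj_X_zero (a : Fin n) (ha : a.val = 0) (j : Fin n) :
    cj (Equiv.swap a.castSucc a.succ) (X j) = X j := by
  by_cases hj : j.val = 0
  · have hXj : X j = MonoidAlgebra.of ℚ G (Equiv.swap a.castSucc a.succ) := by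
      rw [X_def' j 1 (by omega), Fin.sum_univ_one]
      congr 1
      rw [show (⟨((0 : Fin 1).val : ℕ), by omega⟩ : Fin (n + 1)) = a.castSucc from
          Fin.ext (by simp; omega),
        show (⟨(1 : ℕ), by omega⟩ : Fin (n + 1)) = a.succ from Fin.ext (by simp; omega)]
    rw [hXj, cj_of, mul_inv_cancel_right]
  · exact cj_X_fix a j (by omega) (by omega)

noncomputable instance commB :
    CommRing (Algebra.adjoin ℚ (Set.range (X (n := n)))) :=
  Algebra.adjoinCommRingOfComm ℚ (by rintro x ⟨i, rfl⟩ y ⟨j, rfl⟩; exact X_comm i j)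

noncomputable def Y (j : Fin n) : Algebra.adjoin ℚ (Set.range (X (n := n))) :=
  ⟨X j, Algebra.subset_adjoin ⟨j, rfl⟩⟩

/-- Partial monomial product. -/
noncomputable def Wp (T : Finset (Fin n)) (m : Fin n →₀ ℕ) :
    MonoidAlgebra ℚ (Equiv.Perm (Fin (n + 1))) :=
  (↑(∏ j ∈ T, Y j ^ m j) : MonoidAlgebra ℚ (Equiv.Perm (Fin (n + 1))))

noncomputable def W (m : Fin n →₀ ℕ) : MonoidAlgebra ℚ (Equiv.Perm (Fin (n + 1))) :=
  Wp Finset.univ m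

lemma W_eq_list (m : Fin n →₀ ℕ) :
    (List.ofFn (fun k : Fin n => jucysMurphy ℚ (n + 1) k ^ m k)).prod = W m := by
  have h1 : (List.ofFn (fun k : Fin n => jucysMurphy ℚ (n + 1) k ^ m k))
      = List.map (Algebra.adjoin ℚ (Set.range (X (n := n)))).val
          (List.ofFn (fun k => Y k ^ m k)) := by
    rw [List.map_ofFn]
    rfl
  rw [h1, ← map_list_prod, List.prod_ofFn]
  rfl

lemma cj_Wp_fix (g : G) (m : Fin n →₀ ℕ) (T : Finset (Fin n))
    (h : ∀ j ∈ T, cj g (X j) = X j) : cj g (Wp T m) = Wp T m := by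
  refine Finset.prod_induction (fun j => Y j ^ m j)
    (fun y : Algebra.adjoin ℚ (Set.range (X (n := n))) => cj g (y : _) = (y : _)) ?_ ?_ ?_
  · intro x y hx hy
    rw [MulMemClass.coe_mul, map_mul, hx, hy]
  · simp
  · intro j hj
    rw [SubmonoidClass.coe_pow]
    show cj g ((X j) ^ m j) = (X j) ^ m j
    rw [map_pow, h j hj]

lemma Wp_split (m : Fin n →₀ ℕ) (u v : Fin n) (huv : u ≠ v) :
    W m = X u ^ m u * (X v ^ m v * Wp ((Finset.univ.erase u).erase v) m) := by
  have hsplit : (∏ j, Y j ^ m j)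
      = Y u ^ m u * (Y v ^ m v * ∏ j ∈ (Finset.univ.erase u).erase v, Y j ^ m j) := by
    rw [← Finset.mul_prod_erase Finset.univ (fun j => Y j ^ m j) (Finset.mem_univ u),
      ← Finset.mul_prod_erase (Finset.univ.erase u) (fun j => Y j ^ m j)
        (Finset.mem_erase.mpr ⟨huv.symm, Finset.mem_univ v⟩)]
  unfold W Wp
  rw [hsplit, MulMemClass.coe_mul, MulMemClass.coe_mul, SubmonoidClass.coe_pow,
    SubmonoidClass.coe_pow]
  rfl

lemma hSS (a : Fin n) :
    MonoidAlgebra.of ℚ G (Equiv.swap a.castSucc a.succ)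
      * MonoidAlgebra.of ℚ G (Equiv.swap a.castSucc a.succ) = 1 := by
  rw [← map_mul, Equiv.swap_mul_self, map_one]

lemma hSXu (a : Fin n) (ha : 0 < a.val) :
    MonoidAlgebra.of ℚ G (Equiv.swap a.castSucc a.succ) * X ⟨a.val - 1, by omega⟩
      = X a * MonoidAlgebra.of ℚ G (Equiv.swap a.castSucc a.succ) - 1 := by
  have h := cj_X_u a ha
  rw [cj_eq, Equiv.swap_inv] at h
  set S := MonoidAlgebra.of ℚ G (Equiv.swap a.castSucc a.succ) with hS
  calc S * X ⟨a.val - 1, by omega⟩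
      = S * X ⟨a.val - 1, by omega⟩ * (S * S) := by rw [hSS a, mul_one]
    _ = (S * X ⟨a.val - 1, by omega⟩ * S) * S := by rw [mul_assoc, mul_assoc, mul_assoc]
    _ = (X a - S) * S := by rw [h]
    _ = X a * S - 1 := by rw [sub_mul, hSS a]

lemma hprod (a : Fin n) (ha : 0 < a.val) :
    (X a - MonoidAlgebra.of ℚ G (Equiv.swap a.castSucc a.succ))
      * (X ⟨a.val - 1, by omega⟩ + MonoidAlgebra.of ℚ G (Equiv.swap a.castSucc a.succ))
      = X ⟨a.val - 1, by omega⟩ * X a := by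
  set S := MonoidAlgebra.of ℚ G (Equiv.swap a.castSucc a.succ) with hS
  set U := X (⟨a.val - 1, by omega⟩ : Fin n) with hU
  calc (X a - S) * (U + S)
      = X a * U + X a * S - (S * U) - S * S := by noncomm_ring
    _ = X a * U + X a * S - (X a * S - 1) - 1 := by rw [hSXu a ha, hSS a]
    _ = X a * U := by abel
    _ = U * X a := X_comm a _

set_option maxHeartbeats 1000000 in
lemma pair (a : Fin n) (ha : 0 < a.val) (m m' : Fin n →₀ ℕ)
    (h1 : m' ⟨a.val - 1, by omega⟩ = m a) (h2 : m' a = m ⟨a.val - 1, by omega⟩)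
    (h3 : ∀ j : Fin n, j ≠ ⟨a.val - 1, by omega⟩ → j ≠ a → m' j = m j) :
    cj (Equiv.swap a.castSucc a.succ) (W m) + cj (Equiv.swap a.castSucc a.succ) (W m')
      = W m + W m' := by
  set u : Fin n := ⟨a.val - 1, by omega⟩ with hu
  have huv : u ≠ a := by apply Fin.ne_of_val_ne; simp [hu]; omega
  set T := (Finset.univ.erase u).erase a with hT
  have hTfix : ∀ j ∈ T, cj (Equiv.swap a.castSucc a.succ) (X j) = X j := by
    intro j hj
    rw [hT, Finset.mem_erase, Finset.mem_erase] at hj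
    obtain ⟨hja, hju, -⟩ := hj
    have hja' : j.val ≠ a.val := fun hcon => hja (Fin.ext hcon)
    have hju' : j.val ≠ a.val - 1 := fun hcon => hju (Fin.ext (by simp [hu]; omega))
    exact cj_X_fix a j (by omega) (by omega)
  have hC : Wp T m' = Wp T m := by
    unfold Wp
    congr 1
    refine Finset.prod_congr rfl (fun j hj => ?_)
    rw [hT, Finset.mem_erase, Finset.mem_erase] at hj
    rw [h3 j hj.2.1 hj.1]
  rw [Wp_split m u a huv, Wp_split m' u a huv, h1, h2, hC]
  rw [map_mul, map_mul, map_mul, map_mul, map_pow, map_pow, map_pow, map_pow,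
    cj_X_u a ha, cj_X_v a ha, cj_Wp_fix _ _ _ hTfix]
  rw [← mul_assoc, ← mul_assoc, ← mul_assoc, ← mul_assoc, ← add_mul, ← add_mul]
  congr 1
  have hab : (X a - MonoidAlgebra.of ℚ G (Equiv.swap a.castSucc a.succ))
      * (X u + MonoidAlgebra.of ℚ G (Equiv.swap a.castSucc a.succ))
      = (X u + MonoidAlgebra.of ℚ G (Equiv.swap a.castSucc a.succ))
        * (X a - MonoidAlgebra.of ℚ G (Equiv.swap a.castSucc a.succ)) := by
    rw [← cj_X_u a ha, ← cj_X_v a ha, ← map_mul, ← map_mul, X_comm]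
  exact two_var hab (X_comm u a) (by abel) (hprod a ha) (m u) (m a)

set_option maxHeartbeats 1000000 in
theorem aux (n : ℕ) (P : MvPolynomial (Fin n) ℚ) (hP : P.IsSymmetric) :
    (∑ m ∈ P.support, P.coeff m •
        (List.ofFn (fun k : Fin n => jucysMurphy ℚ (n + 1) k ^ m k)).prod) ∈
      Subalgebra.center ℚ (MonoidAlgebra ℚ (Equiv.Perm (Fin (n + 1)))) := by
  classical
  have hz : (∑ m ∈ P.support, P.coeff m •
        (List.ofFn (fun k : Fin n => jucysMurphy ℚ (n + 1) k ^ m k)).prod)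
      = ∑ m ∈ P.support, P.coeff m • W m :=
    Finset.sum_congr rfl (fun m _ => by rw [W_eq_list])
  obtain ⟨z, hzdef⟩ : ∃ z, z = ∑ m ∈ P.support, P.coeff m • W m := ⟨_, rfl⟩
  rw [hz, ← hzdef]
  have hinv : ∀ a : Fin n, cj (Equiv.swap a.castSucc a.succ) z = z := by
    intro a
    by_cases ha : a.val = 0
    · rw [hzdef, map_sum]
      refine Finset.sum_congr rfl (fun m _ => ?_)
      rw [map_smul]
      congr 1
      exact cj_Wp_fix _ m Finset.univ (fun j _ => cj_X_zero a ha j)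
    · have ha' : 0 < a.val := Nat.pos_of_ne_zero ha
      set u : Fin n := ⟨a.val - 1, by omega⟩ with hu
      set e : Equiv.Perm (Fin n) := Equiv.swap u a with he
      set σ : (Fin n →₀ ℕ) → (Fin n →₀ ℕ) := fun m => Finsupp.equivMapDomain e m with hσ
      have hcoeff : ∀ m, P.coeff (σ m) = P.coeff m := by
        intro m
        conv_lhs => rw [← hP e]
        rw [hσ]
        simp only []
        rw [Finsupp.equivMapDomain_eq_mapDomain]
        exact MvPolynomial.coeff_rename_mapDomain e e.injective P m
      have hσσ : ∀ m, σ (σ m) = m := by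
        intro m
        rw [hσ]
        simp only []
        rw [← Finsupp.equivMapDomain_trans, Equiv.swap_swap, Finsupp.equivMapDomain_refl]
      have hmem : ∀ m ∈ P.support, σ m ∈ P.support := by
        intro m hm
        rw [MvPolynomial.mem_support_iff] at hm ⊢
        rw [hcoeff]
        exact hm
      have reindex : ∀ (H : (Fin n →₀ ℕ) → MonoidAlgebra ℚ (Equiv.Perm (Fin (n + 1)))),
          ∑ m ∈ P.support, P.coeff m • H (σ m) = ∑ m ∈ P.support, P.coeff m • H m := by
        intro H
        refine Finset.sum_nbij' σ σ hmem hmem (fun m _ => hσσ m) (fun m _ => hσσ m) ?_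
        intro m hm
        rw [hcoeff m]
      have hkey : ∀ m : Fin n →₀ ℕ,
          cj (Equiv.swap a.castSucc a.succ) (W m)
            + cj (Equiv.swap a.castSucc a.succ) (W (σ m)) = W m + W (σ m) := by
        intro m
        refine pair a ha' m (σ m) ?_ ?_ ?_
        · rw [hσ]
          simp only [Finsupp.equivMapDomain_apply, he, Equiv.symm_swap]
          rw [show Equiv.swap u a (⟨a.val - 1, by omega⟩ : Fin n) = a from by
            rw [show (⟨a.val - 1, by omega⟩ : Fin n) = u from rfl, Equiv.swap_apply_left]]
        · rw [hσ]
          simp only [Finsupp.equivMapDomain_apply, he, Equiv.symm_swap]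
          rw [Equiv.swap_apply_right]
        · intro j hj1 hj2
          rw [hσ]
          simp only [Finsupp.equivMapDomain_apply, he, Equiv.symm_swap]
          rw [Equiv.swap_apply_of_ne_of_ne (by rw [← hu] at hj1; exact hj1) hj2]
      have e1 : cj (Equiv.swap a.castSucc a.succ) z
          = ∑ m ∈ P.support, P.coeff m • cj (Equiv.swap a.castSucc a.succ) (W m) := by
        rw [hzdef, map_sum]
        exact Finset.sum_congr rfl (fun m _ => by rw [map_smul])
      have e2 : ∑ m ∈ P.support, P.coeff m • cj (Equiv.swap a.castSucc a.succ) (W m)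
          = ∑ m ∈ P.support, P.coeff m • cj (Equiv.swap a.castSucc a.succ) (W (σ m)) :=
        (reindex (fun m => cj (Equiv.swap a.castSucc a.succ) (W m))).symm
      have e3 : ∑ m ∈ P.support, P.coeff m • W (σ m) = ∑ m ∈ P.support, P.coeff m • W m :=
        reindex W
      have e4 : (∑ m ∈ P.support, P.coeff m • cj (Equiv.swap a.castSucc a.succ) (W m))
            + (∑ m ∈ P.support, P.coeff m • cj (Equiv.swap a.castSucc a.succ) (W (σ m)))
          = (∑ m ∈ P.support, P.coeff m • W m) + (∑ m ∈ P.support, P.coeff m • W (σ m)) := by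
        rw [← Finset.sum_add_distrib, ← Finset.sum_add_distrib]
        refine Finset.sum_congr rfl (fun m _ => ?_)
        rw [← smul_add, ← smul_add, hkey m]
      rw [← e2, e3] at e4
      have e5 : ∑ m ∈ P.support, P.coeff m • cj (Equiv.swap a.castSucc a.succ) (W m) = z := by
        have h2 : ((2 : ℚ))⁻¹ • ((2 : ℚ) • (∑ m ∈ P.support,
              P.coeff m • cj (Equiv.swap a.castSucc a.succ) (W m)))
            = ((2 : ℚ))⁻¹ • ((2 : ℚ) • z) := by
          rw [two_smul, two_smul]
          rw [hzdef]
          exact congrArg _ e4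
        rw [smul_smul, smul_smul] at h2
        norm_num at h2
        exact h2
      rw [e1, e5]
  have hadj : ∀ i : Fin n, MonoidAlgebra.of ℚ (Equiv.Perm (Fin (n + 1))) (Equiv.swap i.castSucc i.succ) * z
      = z * MonoidAlgebra.of ℚ (Equiv.Perm (Fin (n + 1))) (Equiv.swap i.castSucc i.succ) :=
    fun i => comm_of_cj_fix (hinv i)
  clear hz hzdef hinv
  rw [Subalgebra.mem_center_iff]
  have hcom : ∀ g : Equiv.Perm (Fin (n + 1)),
      MonoidAlgebra.of ℚ (Equiv.Perm (Fin (n + 1))) g * z = z * MonoidAlgebra.of ℚ (Equiv.Perm (Fin (n + 1))) g := by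
    have hgen : ∀ g ∈ Submonoid.closure
        (Set.range fun i : Fin n => Equiv.swap i.castSucc i.succ),
        MonoidAlgebra.of ℚ (Equiv.Perm (Fin (n + 1))) g * z = z * MonoidAlgebra.of ℚ (Equiv.Perm (Fin (n + 1))) g := by
      intro g hg
      induction hg using Submonoid.closure_induction with
      | mem x hx =>
        obtain ⟨i, rfl⟩ := hx
        exact hadj i
      | one => rw [map_one, one_mul, mul_one]
      | mul x y hx hy ihx ihy =>
        rw [map_mul, mul_assoc, ihy, ← mul_assoc, ihx, mul_assoc]
    intro g
    exact hgen g (by rw [Equiv.Perm.mclosure_swap_castSucc_succ]; exact Submonoid.mem_top g)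
  intro b
  induction b using MonoidAlgebra.induction_on with
  | of g => exact hcom g
  | add f f' hf hf' => rw [add_mul, mul_add, hf, hf']
  | smul r f hf => rw [smul_mul_assoc, mul_smul_comm, hf]

end JMaux

/-- Symmetric polynomials in the Jucys–Murphy elements `J₂, …, J_d` belong to the center
of the group algebra `ℚS(d)`. (The evaluation of a polynomial at the `J_k`'s is taken
with a fixed ordering of the variables in each monomial.) -/
theorem symmetric_jucysMurphy_mem_center (d : ℕ) (P : MvPolynomial (Fin (d - 1)) ℚ)
    (hP : P.IsSymmetric) :
    (∑ m ∈ P.support, P.coeff m •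
        (List.ofFn (fun k : Fin (d - 1) => jucysMurphy ℚ d k ^ m k)).prod) ∈
      Subalgebra.center ℚ (MonoidAlgebra ℚ (Equiv.Perm (Fin d))) := by
  cases d with
  | zero =>
    refine Subalgebra.sum_mem _ (fun m _ => Subalgebra.smul_mem _ ?_ _)
    have h0 : (List.ofFn (fun k : Fin (0 - 1) => jucysMurphy ℚ 0 k ^ m k)) = [] :=
      List.ofFn_zero
    rw [h0, List.prod_nil]
    exact Subalgebra.one_mem _
  | succ n => exact JMaux.aux n P hP
end

section
/- Every permutation of [d] can be expressed uniquely as a product of transpositions along a strictly monotone sequence; consequently, the strictly monotone Hurwitz number equals the free single Hurwitz number: H^<_r(λ,ν) = H^|_r(λ,ν) for all r ≥ 0 and λ, ν ⊢ d. -/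
open Equiv

/-- The conjugacy class `C_λ ⊆ S(d)` of permutations of cycle type `λ ⊢ d`. -/
noncomputable def conjClass {d : ℕ} (lam : Nat.Partition d) : Finset (Equiv.Perm (Fin d)) :=
  open scoped Classical in
  Finset.univ.filter fun σ => fullCycleType σ = lam.parts

/-- The symmetry factor `z(λ) = d! / #C_λ`. -/
noncomputable def zsym {d : ℕ} (lam : Nat.Partition d) : ℚ :=
  (d.factorial : ℚ) / (conjClass lam).card

/-- Tuples `(α, τ₁, …, τ_r, β)` with `α ∈ C_λ`, `β ∈ C_ν`, the `τ_i` a strictly monotone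
sequence of transpositions (the larger moved points strictly increase), and
`α ∘ τ₁ ∘ ⋯ ∘ τ_r ∘ β = id`. -/
def strictMonotoneTuples {d : ℕ} (r : ℕ) (lam nu : Nat.Partition d) :
    Set (Equiv.Perm (Fin d) × (Fin r → Equiv.Perm (Fin d)) × Equiv.Perm (Fin d)) :=
  {t | fullCycleType t.1 = lam.parts ∧ fullCycleType t.2.2 = nu.parts ∧
    (∀ i, Equiv.Perm.IsSwap (t.2.1 i)) ∧
    (∀ i j : Fin r, i < j → (t.2.1 i).support.max < (t.2.1 j).support.max) ∧
    t.1 * (List.ofFn t.2.1).prod * t.2.2 = 1}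

/-- Analogous tuples with weakly monotone sequences of transpositions. -/
def weakMonotoneTuples {d : ℕ} (r : ℕ) (lam nu : Nat.Partition d) :
    Set (Equiv.Perm (Fin d) × (Fin r → Equiv.Perm (Fin d)) × Equiv.Perm (Fin d)) :=
  {t | fullCycleType t.1 = lam.parts ∧ fullCycleType t.2.2 = nu.parts ∧
    (∀ i, Equiv.Perm.IsSwap (t.2.1 i)) ∧
    (∀ i j : Fin r, i < j → (t.2.1 i).support.max ≤ (t.2.1 j).support.max) ∧
    t.1 * (List.ofFn t.2.1).prod * t.2.2 = 1}

/-- The strictly monotone Hurwitz number `H^<_r(λ,ν)`. -/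
noncomputable def Hlt {d : ℕ} (r : ℕ) (lam nu : Nat.Partition d) : ℚ :=
  (Nat.card (strictMonotoneTuples r lam nu) : ℚ) / d.factorial

/-- The weakly monotone Hurwitz number `H^≤_r(λ,ν)`. -/
noncomputable def Hle {d : ℕ} (r : ℕ) (lam nu : Nat.Partition d) : ℚ :=
  (Nat.card (weakMonotoneTuples r lam nu) : ℚ) / d.factorial

/-- The generating series `H^<(λ,ν) = Σ_{r=0}^{d-1} ℏ^r H^<_r(λ,ν)`. -/
noncomputable def HltSeries {d : ℕ} (lam nu : Nat.Partition d) : PowerSeries ℚ :=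
  ∑ r ∈ Finset.range (d - 1 + 1),
    PowerSeries.C (Hlt r lam nu) * (PowerSeries.X : PowerSeries ℚ) ^ r

/-- The generating series `H^≤(λ,ν) = Σ_{r ≥ 0} (-ℏ)^r H^≤_r(λ,ν)`. -/
noncomputable def HleSeries {d : ℕ} (lam nu : Nat.Partition d) : PowerSeries ℚ :=
  PowerSeries.mk fun r => (-1 : ℚ) ^ r * Hle r lam nu

/-- The free single Hurwitz number `H^|_r(λ,ν)`: it counts (divided by `d!`) triples
`(α, ψ, β)` with `α ∈ C_λ`, `β ∈ C_ν`, `ψ` of colength `r` (colength = `d - #cycles`),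
and `α ∘ ψ ∘ β = id`. -/
noncomputable def Hfree {d : ℕ} (r : ℕ) (lam nu : Nat.Partition d) : ℚ :=
  (Nat.card {t : Equiv.Perm (Fin d) × Equiv.Perm (Fin d) × Equiv.Perm (Fin d) //
      fullCycleType t.1 = lam.parts ∧ fullCycleType t.2.2 = nu.parts ∧
      d - (fullCycleType t.2.1).card = r ∧ (fullCycleType t.2.1).card = d - r ∧
      t.1 * t.2.1 * t.2.2 = 1} : ℚ) / d.factorial

namespace HurwitzAux

open Equiv.Perm

variable {d : ℕ}

lemma fullCycleType_eq (σ : Perm (Fin d)) :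
    fullCycleType σ = Multiset.replicate (d - σ.cycleType.sum) 1 + σ.cycleType := by
  have h1 : Fintype.ofFinite (Fin d) = Fin.fintype d := Subsingleton.elim _ _
  have h2 : Classical.decEq (Fin d) = instDecidableEqFin d := Subsingleton.elim _ _
  unfold fullCycleType
  rw [h1, h2, Nat.card_eq_fintype_card, Fintype.card_fin]

lemma ncyc_formula (σ : Perm (Fin d)) :
    (fullCycleType σ).card = d - σ.support.card + σ.cycleType.card := by
  rw [fullCycleType_eq, Multiset.card_add, Multiset.card_replicate, Equiv.Perm.sum_cycleType]

lemma fix_of_max_lt {σ : Perm (Fin d)} {x : Fin d} (h : σ.support.max < (x : WithBot (Fin d))) :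
    σ x = x := by
  by_contra hx
  exact absurd (Finset.le_max (Equiv.Perm.mem_support.mpr hx)) (not_le.mpr h)

lemma prod_fix {l : List (Perm (Fin d))} {x : Fin d} (h : ∀ τ ∈ l, τ x = x) : l.prod x = x := by
  induction l with
  | nil => rfl
  | cons τ t ih =>
      rw [List.prod_cons, Equiv.Perm.mul_apply, ih (fun τ' h' => h τ' (List.mem_cons_of_mem _ h')),
        h τ List.mem_cons_self]

lemma lt_of_fix_ge {σ : Perm (Fin d)} {b x : Fin d} (h : ∀ y, b ≤ y → σ y = y) (hx : x < b) :
    σ x < b := by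
  by_contra hc
  have h2 : σ x = x := σ.injective (h _ (not_lt.mp hc))
  rw [h2] at hc
  exact hc hx

lemma swap_support_max {a b : Fin d} (h : a < b) :
    (Equiv.swap a b).support.max = (b : WithBot (Fin d)) := by
  rw [Equiv.Perm.support_swap h.ne]
  apply le_antisymm
  · apply Finset.max_le
    intro x hx
    rcases Finset.mem_insert.mp hx with rfl | hx
    · exact_mod_cast h.le
    · exact le_of_eq (by rw [Finset.mem_singleton.mp hx])
  · exact Finset.le_max (Finset.mem_insert_of_mem (Finset.mem_singleton_self b))

lemma isSwap_exists_lt {τ : Perm (Fin d)} (h : τ.IsSwap) : ∃ a b, a < b ∧ τ = Equiv.swap a b := by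
  obtain ⟨x, y, hxy, rfl⟩ := h
  rcases lt_or_gt_of_ne hxy with h | h
  · exact ⟨x, y, h, rfl⟩
  · exact ⟨y, x, h, Equiv.swap_comm x y⟩

/-- key structural lemma about nonempty strictly monotone swap lists -/
lemma struct {l : List (Perm (Fin d))} (hs : ∀ τ ∈ l, Equiv.Perm.IsSwap τ)
    (hp : l.Pairwise (fun a b => a.support.max < b.support.max)) (hne : l ≠ []) :
    ∃ a b : Fin d, a < b ∧ l.getLast hne = Equiv.swap a b ∧
      l.prod b < b ∧ l.prod a = b ∧
      (l.prod).support.max = (b : WithBot (Fin d)) ∧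
      l.dropLast.prod = l.prod * Equiv.swap a b := by
  obtain ⟨a, b, hab, hτ⟩ := isSwap_exists_lt (hs _ (List.getLast_mem hne))
  have hl : l.dropLast ++ [Equiv.swap a b] = l := by
    rw [← hτ]; exact List.dropLast_append_getLast hne
  have hprod : l.prod = l.dropLast.prod * Equiv.swap a b := by
    conv_lhs => rw [← hl]
    rw [List.prod_append, List.prod_singleton]
  have hmax : ∀ τ' ∈ l.dropLast, τ'.support.max < (b : WithBot (Fin d)) := by
    intro τ' hτ'
    have hp' : (l.dropLast ++ [Equiv.swap a b]).Pairwise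
        (fun a b => a.support.max < b.support.max) := by rw [hl]; exact hp
    have := (List.pairwise_append.mp hp').2.2 τ' hτ' _ (List.mem_singleton_self _)
    rwa [swap_support_max hab] at this
  have hfixge : ∀ y : Fin d, b ≤ y → l.dropLast.prod y = y := by
    intro y hy
    exact prod_fix fun τ' h' => fix_of_max_lt (lt_of_lt_of_le (hmax τ' h')
      (by exact_mod_cast hy))
  have hpb : l.prod b < b := by
    rw [hprod, Equiv.Perm.mul_apply, Equiv.swap_apply_right]
    exact lt_of_fix_ge hfixge hab
  have hpa : l.prod a = b := by
    rw [hprod, Equiv.Perm.mul_apply, Equiv.swap_apply_left]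
    exact hfixge b le_rfl
  have hfixgt : ∀ x : Fin d, b < x → l.prod x = x := by
    intro x hx
    rw [hprod, Equiv.Perm.mul_apply, Equiv.swap_apply_of_ne_of_ne (hab.trans hx).ne' hx.ne']
    exact hfixge x hx.le
  refine ⟨a, b, hab, hτ, hpb, hpa, ?_, ?_⟩
  · apply le_antisymm
    · apply Finset.max_le
      intro x hx
      rcases le_or_gt x b with h | h
      · exact_mod_cast h
      · exact absurd (hfixgt x h) (Equiv.Perm.mem_support.mp hx)
    · exact Finset.le_max (Equiv.Perm.mem_support.mpr hpb.ne)
  · rw [hprod, mul_assoc, Equiv.swap_mul_self, mul_one]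

lemma card_cycleType_eq (σ : Perm (Fin d)) : σ.cycleType.card = σ.cycleFactorsFinset.card := by
  simp [Equiv.Perm.cycleType]

/-- multiplying on the right by a swap moving a fixed point `b` merges cycles -/
lemma merge_lemma (f : Perm (Fin d)) (a b : Fin d) (hb : f b = b) (hab : a ≠ b) :
    (f * Equiv.swap a b).support.card = f.support.card + (if f a = a then 2 else 1) ∧
    (f * Equiv.swap a b).cycleType.card = f.cycleType.card + (if f a = a then 1 else 0) := by
  set s := f * Equiv.swap a b with hs
  have hsa : s a = b := by rw [hs, Equiv.Perm.mul_apply, Equiv.swap_apply_left, hb]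
  have hfa_ne : f a ≠ b := fun h => hab (f.injective (h.trans hb.symm))
  have hsb : s b = f a := by rw [hs, Equiv.Perm.mul_apply, Equiv.swap_apply_right]
  have hsx : ∀ x : Fin d, x ≠ a → x ≠ b → s x = f x := fun x h1 h2 => by
    rw [hs, Equiv.Perm.mul_apply, Equiv.swap_apply_of_ne_of_ne h1 h2]
  by_cases ha : f a = a
  · -- disjoint case
    have hdisj : Equiv.Perm.Disjoint f (Equiv.swap a b) := by
      intro x
      by_cases h1 : x = a
      · subst h1; exact Or.inl ha
      by_cases h2 : x = b
      · subst h2; exact Or.inl hb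
      · exact Or.inr (Equiv.swap_apply_of_ne_of_ne h1 h2)
    have hct : s.cycleType = f.cycleType + {2} := by
      rw [hs, Equiv.Perm.Disjoint.cycleType_mul hdisj, (Equiv.Perm.isCycle_swap hab).cycleType,
        Equiv.Perm.card_support_swap hab]
    constructor
    · rw [← Equiv.Perm.sum_cycleType, hct, ha, if_pos rfl, Multiset.sum_add,
        Equiv.Perm.sum_cycleType]
      rfl
    · rw [hct, ha, if_pos rfl, Multiset.card_add]
      rfl
  · -- merge case
    simp only [if_neg ha]
    have haf : a ∈ f.support := Equiv.Perm.mem_support.mpr ha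
    have hbf : b ∉ f.support := fun h => Equiv.Perm.mem_support.mp h hb
    set c := f.cycleOf a with hc
    have hc_mem : c ∈ f.cycleFactorsFinset := Equiv.Perm.cycleOf_mem_cycleFactorsFinset_iff.mpr haf
    have hc_cycle : c.IsCycle := Equiv.Perm.isCycle_cycleOf f ha
    have hac : a ∈ c.support := by
      rw [hc, Equiv.Perm.mem_support_cycleOf_iff]
      exact ⟨Equiv.Perm.SameCycle.refl f a, haf⟩
    have hbc : b ∉ c.support := fun h => hbf (Equiv.Perm.support_cycleOf_le f a h)
    have happ : ∀ x ∈ c.support, c x = f x := (Equiv.Perm.mem_cycleFactorsFinset_iff.mp hc_mem).2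
    have hca : c a = f a := happ a hac
    have hcb : c b = b := Equiv.Perm.notMem_support.mp hbc
    set c' := c * Equiv.swap a b with hc'
    have hc'a : c' a = b := by rw [hc', Equiv.Perm.mul_apply, Equiv.swap_apply_left, hcb]
    have hc'b : c' b = f a := by rw [hc', Equiv.Perm.mul_apply, Equiv.swap_apply_right, hca]
    have hc'x : ∀ x : Fin d, x ≠ a → x ≠ b → c' x = c x := fun x h1 h2 => by
      rw [hc', Equiv.Perm.mul_apply, Equiv.swap_apply_of_ne_of_ne h1 h2]
    have supp_c' : c'.support = insert b c.support := by
      ext x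
      rw [Equiv.Perm.mem_support, Finset.mem_insert]
      by_cases h1 : x = b
      · subst h1
        rw [hc'b]
        exact ⟨fun _ => Or.inl rfl, fun _ => hfa_ne⟩
      by_cases h2 : x = a
      · subst h2
        rw [hc'a]
        exact ⟨fun _ => Or.inr hac, fun _ => Ne.symm hab⟩
      · rw [hc'x x h2 h1]
        rw [← Equiv.Perm.mem_support]
        simp [h1]
    have hca_ne : c a ≠ a := by rw [hca]; exact ha
    have horb : ∀ i : ℕ, 0 < i → (∀ j, 0 < j → j ≤ i → (c ^ j) a ≠ a) → (c' ^ i) b = (c ^ i) a := by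
      intro i
      induction i with
      | zero => intro h; exact absurd h (lt_irrefl 0)
      | succ i ih =>
          intro _ hj
          rcases Nat.eq_zero_or_pos i with rfl | hi
          · rw [pow_one, pow_one, hc'b, hca]
          · have h1 : (c' ^ i) b = (c ^ i) a :=
              ih hi (fun j hj1 hj2 => hj j hj1 (hj2.trans (Nat.le_succ i)))
            have hz1 : (c ^ i) a ≠ a := hj i hi (Nat.le_succ i)
            have hz2 : (c ^ i) a ≠ b := fun h => hbc (h ▸ (Equiv.Perm.pow_apply_mem_support.mpr hac))
            rw [pow_succ', Equiv.Perm.mul_apply, h1, hc'x _ hz1 hz2, ← Equiv.Perm.mul_apply,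
              ← pow_succ']
    have cycle_c' : c'.IsCycle := by
      refine ⟨a, by rw [hc'a]; exact Ne.symm hab, ?_⟩
      intro y hy
      have hy' : y ∈ c'.support := Equiv.Perm.mem_support.mpr hy
      rw [supp_c', Finset.mem_insert] at hy'
      have h1 : c'.SameCycle a b := ⟨1, by simpa using hc'a⟩
      rcases hy' with rfl | hy'
      · exact h1
      · by_cases hya : y = a
        · subst hya; exact Equiv.Perm.SameCycle.refl _ _
        have hsc : f.SameCycle a y := (Equiv.Perm.mem_support_cycleOf_iff.mp hy').1
        have hex : ∃ i : ℕ, (c ^ i) a = y := by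
          obtain ⟨i, _, hi⟩ := hsc.exists_pow_eq'
          exact ⟨i, by rw [hc, Equiv.Perm.cycleOf_pow_apply_self, hi]⟩
        set i0 := Nat.find hex with hi0
        have hP : (c ^ i0) a = y := Nat.find_spec hex
        have hi0_pos : 0 < i0 := by
          rcases Nat.eq_zero_or_pos i0 with h | h
          · exfalso; apply hya; rw [← hP, h, pow_zero]; rfl
          · exact h
        have hjs : ∀ j, 0 < j → j ≤ i0 → (c ^ j) a ≠ a := by
          intro j hj1 hj2 hj3
          have hcj : c ^ j = 1 := (hc_cycle.pow_eq_one_iff' hca_ne).mpr hj3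
          rcases eq_or_lt_of_le hj2 with rfl | hj2
          · apply hya; rw [← hP, hcj]; rfl
          · have hthis : (c ^ (i0 - j)) a = y := by
              calc (c ^ (i0 - j)) a = (c ^ (i0 - j) * c ^ j) a := by rw [hcj, mul_one]
                _ = (c ^ i0) a := by rw [← pow_add, Nat.sub_add_cancel hj2.le]
                _ = y := hP
            exact Nat.find_min hex (by omega) hthis
        have h2 : c'.SameCycle b y := ⟨i0, by rw [zpow_natCast, horb i0 hi0_pos hjs, hP]⟩
        exact h1.trans h2
    have agree : ∀ x ∈ c'.support, c' x = s x := by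
      intro x hx
      by_cases h1 : x = a
      · subst h1; rw [hc'a, hsa]
      by_cases h2 : x = b
      · subst h2; rw [hc'b, hsb]
      · rw [hc'x x h1 h2, hsx x h1 h2]
        rw [supp_c', Finset.mem_insert] at hx
        exact happ x (hx.resolve_left h2)
    have hc'_mem : c' ∈ s.cycleFactorsFinset :=
      Equiv.Perm.mem_cycleFactorsFinset_iff.mpr ⟨cycle_c', agree⟩
    have hbc' : b ∈ c'.support := by rw [supp_c']; exact Finset.mem_insert_self b _
    have hac' : a ∈ c'.support := by rw [supp_c']; exact Finset.mem_insert_of_mem hac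
    have supp_s : s.support = insert b f.support := by
      ext x
      rw [Equiv.Perm.mem_support, Finset.mem_insert]
      by_cases h1 : x = b
      · subst h1; rw [hsb]; exact ⟨fun _ => Or.inl rfl, fun _ => hfa_ne⟩
      by_cases h2 : x = a
      · subst h2; rw [hsa]
        exact ⟨fun _ => Or.inr haf, fun _ => Ne.symm hab⟩
      · rw [hsx x h2 h1, ← Equiv.Perm.mem_support]; simp [h1]
    have factors_eq : s.cycleFactorsFinset = insert c' (f.cycleFactorsFinset.erase c) := by
      ext g
      rw [Finset.mem_insert, Finset.mem_erase]
      constructor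
      · intro hg
        by_cases hgc : g = c'
        · exact Or.inl hgc
        have hgb : b ∉ g.support := fun hbg =>
          hgc ((Equiv.Perm.cycle_is_cycleOf hbg hg).trans
            (Equiv.Perm.cycle_is_cycleOf hbc' hc'_mem).symm)
        have hga : a ∉ g.support := fun hag =>
          hgc ((Equiv.Perm.cycle_is_cycleOf hag hg).trans
            (Equiv.Perm.cycle_is_cycleOf hac' hc'_mem).symm)
        have hg' : g ∈ f.cycleFactorsFinset := by
          rw [Equiv.Perm.mem_cycleFactorsFinset_iff] at hg ⊢
          refine ⟨hg.1, fun x hx => ?_⟩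
          exact (hg.2 x hx).trans (hsx x (fun h => hga (h ▸ hx)) (fun h => hgb (h ▸ hx)))
        refine Or.inr ⟨fun h => hga (h ▸ hac), hg'⟩
      · rintro (rfl | ⟨hgc, hg⟩)
        · exact hc'_mem
        · have hgb : b ∉ g.support := fun h =>
            hbf (Equiv.Perm.mem_cycleFactorsFinset_support_le hg h)
          have hga : a ∉ g.support := fun hag => hgc (Equiv.Perm.cycle_is_cycleOf hag hg)
          rw [Equiv.Perm.mem_cycleFactorsFinset_iff] at hg ⊢
          refine ⟨hg.1, fun x hx => ?_⟩
          exact (hg.2 x hx).trans (hsx x (fun h => hga (h ▸ hx)) (fun h => hgb (h ▸ hx))).symm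
    have hc'_not : c' ∉ f.cycleFactorsFinset.erase c := fun h =>
      hbf (Equiv.Perm.mem_cycleFactorsFinset_support_le (Finset.mem_of_mem_erase h) hbc')
    have hcard_fact : s.cycleFactorsFinset.card = f.cycleFactorsFinset.card := by
      rw [factors_eq, Finset.card_insert_of_notMem hc'_not, Finset.card_erase_of_mem hc_mem]
      have : 0 < f.cycleFactorsFinset.card := Finset.card_pos.mpr ⟨c, hc_mem⟩
      omega
    constructor
    · rw [supp_s, Finset.card_insert_of_notMem hbf]
    · rw [card_cycleType_eq, card_cycleType_eq, hcard_fact, Nat.add_zero]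

lemma ncyc_mul_swap (f : Perm (Fin d)) (a b : Fin d) (hb : f b = b) (hab : a ≠ b) :
    (fullCycleType (f * Equiv.swap a b)).card + 1 = (fullCycleType f).card := by
  obtain ⟨h1, h2⟩ := merge_lemma f a b hb hab
  have hle : (f * Equiv.swap a b).support.card ≤ d := by
    simpa using Finset.card_le_univ (f * Equiv.swap a b).support
  rw [ncyc_formula, ncyc_formula]
  by_cases ha : f a = a <;> simp only [ha, if_pos, if_neg, if_true, if_false] at h1 h2 <;> omega

def msr (σ : Perm (Fin d)) : ℕ := σ.support.sup fun x => (x : ℕ) + 1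

lemma exists_fact (n : ℕ) : ∀ (σ : Perm (Fin d)), msr σ ≤ n →
    ∃ l : List (Perm (Fin d)), (∀ τ ∈ l, Equiv.Perm.IsSwap τ) ∧
      l.Pairwise (fun a b => a.support.max < b.support.max) ∧ l.prod = σ ∧
      (∀ τ ∈ l, τ.support.max ≤ σ.support.max) ∧
      l.length + (fullCycleType σ).card = d := by
  induction n using Nat.strong_induction_on with
  | _ n ih =>
    intro σ hσ
    by_cases h1 : σ = 1
    · subst h1
      refine ⟨[], by simp, by simp, by simp, by simp, ?_⟩
      simp [ncyc_formula]
    · have hne : σ.support.Nonempty := by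
        rw [Finset.nonempty_iff_ne_empty, ne_eq, Equiv.Perm.support_eq_empty_iff]
        exact h1
      set b := σ.support.max' hne with hbdef
      have hbmem : b ∈ σ.support := σ.support.max'_mem hne
      have hmax_eq : σ.support.max = (b : WithBot (Fin d)) := (Finset.coe_max' hne).symm
      set a := σ⁻¹ b with hadef
      have hσa : σ a = b := Equiv.apply_symm_apply σ b
      have hab : a ≠ b := fun h => (Equiv.Perm.mem_support.mp hbmem) (h ▸ hσa)
      have hamem : a ∈ σ.support := Equiv.Perm.mem_support.mpr (by rw [hσa]; exact Ne.symm hab)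
      have halt : a < b := lt_of_le_of_ne (σ.support.le_max' a hamem) hab
      set σ' := σ * Equiv.swap a b with hσ'def
      have hfixb : σ' b = b := by rw [hσ'def, Equiv.Perm.mul_apply, Equiv.swap_apply_right, hσa]
      have hfixgt : ∀ x : Fin d, b < x → σ' x = x := by
        intro x hx
        rw [hσ'def, Equiv.Perm.mul_apply,
          Equiv.swap_apply_of_ne_of_ne (halt.trans hx).ne' hx.ne']
        by_contra h
        exact absurd (σ.support.le_max' x (Equiv.Perm.mem_support.mpr h)) (not_le.mpr hx)
      have hsupp' : ∀ x ∈ σ'.support, x < b := by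
        intro x hx
        rcases lt_trichotomy x b with h | rfl | h
        · exact h
        · exact absurd hfixb (Equiv.Perm.mem_support.mp hx)
        · exact absurd (hfixgt x h) (Equiv.Perm.mem_support.mp hx)
      have hmsr' : msr σ' ≤ (b : ℕ) :=
        Finset.sup_le fun x hx => Nat.succ_le_of_lt (by exact_mod_cast hsupp' x hx)
      have hblt : (b : ℕ) < n := by
        have h2 : (b : ℕ) + 1 ≤ msr σ := by
          exact Finset.le_sup (f := fun x : Fin d => (x : ℕ) + 1) hbmem
        omega
      obtain ⟨l', hs', hp', hprod', hbound', hlen'⟩ := ih b hblt σ' hmsr'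
      have hσ'max : σ'.support.max < (b : WithBot (Fin d)) := by
        rcases Finset.eq_empty_or_nonempty σ'.support with h | h
        · rw [h, Finset.max_empty]; exact WithBot.bot_lt_coe b
        · obtain ⟨y, hy⟩ := Finset.max_of_nonempty h
          rw [hy]
          exact_mod_cast hsupp' y (Finset.mem_of_max hy)
      refine ⟨l' ++ [Equiv.swap a b], ?_, ?_, ?_, ?_, ?_⟩
      · intro τ hτ
        rcases List.mem_append.mp hτ with h | h
        · exact hs' τ h
        · rw [List.mem_singleton.mp h]; exact ⟨a, b, hab, rfl⟩
      · rw [List.pairwise_append]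
        refine ⟨hp', List.pairwise_singleton _ _, ?_⟩
        intro x hx τ hτ
        rw [List.mem_singleton.mp hτ, swap_support_max halt]
        exact lt_of_le_of_lt (hbound' x hx) hσ'max
      · rw [List.prod_append, List.prod_singleton, hprod', hσ'def, mul_assoc,
          Equiv.swap_mul_self, mul_one]
      · intro τ hτ
        rw [hmax_eq]
        rcases List.mem_append.mp hτ with h | h
        · exact le_of_lt (lt_of_le_of_lt (hbound' τ h) hσ'max)
        · rw [List.mem_singleton.mp h, swap_support_max halt]
      · rw [List.length_append, List.length_singleton]
        have hm := ncyc_mul_swap σ' a b hfixb hab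
        have he : σ' * Equiv.swap a b = σ := by
          rw [hσ'def, mul_assoc, Equiv.swap_mul_self, mul_one]
        rw [he] at hm
        omega

lemma unique_fact (n : ℕ) : ∀ (σ : Perm (Fin d)), msr σ ≤ n →
    ∀ l₁ l₂ : List (Perm (Fin d)),
    ((∀ τ ∈ l₁, Equiv.Perm.IsSwap τ) ∧
      l₁.Pairwise (fun a b => a.support.max < b.support.max) ∧ l₁.prod = σ) →
    ((∀ τ ∈ l₂, Equiv.Perm.IsSwap τ) ∧
      l₂.Pairwise (fun a b => a.support.max < b.support.max) ∧ l₂.prod = σ) →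
    l₁ = l₂ := by
  induction n using Nat.strong_induction_on with
  | _ n ih =>
    rintro σ hσ l₁ l₂ ⟨hs1, hp1, hprod1⟩ ⟨hs2, hp2, hprod2⟩
    by_cases h1 : σ = 1
    · subst h1
      have key : ∀ l : List (Perm (Fin d)), (∀ τ ∈ l, Equiv.Perm.IsSwap τ) →
          l.Pairwise (fun a b => a.support.max < b.support.max) → l.prod = 1 → l = [] := by
        intro l hs hp hprod
        by_contra hne
        obtain ⟨a, b, hab, _, hpb, _, _, _⟩ := struct hs hp hne
        rw [hprod] at hpb
        exact absurd rfl (ne_of_lt hpb)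
      rw [key l₁ hs1 hp1 hprod1, key l₂ hs2 hp2 hprod2]
    · have hne : σ.support.Nonempty := by
        rw [Finset.nonempty_iff_ne_empty, ne_eq, Equiv.Perm.support_eq_empty_iff]
        exact h1
      set b := σ.support.max' hne with hbdef
      have hbmem : b ∈ σ.support := σ.support.max'_mem hne
      have hmax_eq : σ.support.max = (b : WithBot (Fin d)) := (Finset.coe_max' hne).symm
      set a := σ⁻¹ b with hadef
      have hσa : σ a = b := Equiv.apply_symm_apply σ b
      have hab : a ≠ b := fun h => (Equiv.Perm.mem_support.mp hbmem) (h ▸ hσa)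
      have hamem : a ∈ σ.support := Equiv.Perm.mem_support.mpr (by rw [hσa]; exact Ne.symm hab)
      have halt : a < b := lt_of_le_of_ne (σ.support.le_max' a hamem) hab
      set σ' := σ * Equiv.swap a b with hσ'def
      have hfixb : σ' b = b := by rw [hσ'def, Equiv.Perm.mul_apply, Equiv.swap_apply_right, hσa]
      have hfixgt : ∀ x : Fin d, b < x → σ' x = x := by
        intro x hx
        rw [hσ'def, Equiv.Perm.mul_apply,
          Equiv.swap_apply_of_ne_of_ne (halt.trans hx).ne' hx.ne']
        by_contra h
        exact absurd (σ.support.le_max' x (Equiv.Perm.mem_support.mpr h)) (not_le.mpr hx)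
      have hsupp' : ∀ x ∈ σ'.support, x < b := by
        intro x hx
        rcases lt_trichotomy x b with h | rfl | h
        · exact h
        · exact absurd hfixb (Equiv.Perm.mem_support.mp hx)
        · exact absurd (hfixgt x h) (Equiv.Perm.mem_support.mp hx)
      have hmsr' : msr σ' ≤ (b : ℕ) :=
        Finset.sup_le fun x hx => Nat.succ_le_of_lt (by exact_mod_cast hsupp' x hx)
      have hblt : (b : ℕ) < n := by
        have h2 : (b : ℕ) + 1 ≤ msr σ := by
          exact Finset.le_sup (f := fun x : Fin d => (x : ℕ) + 1) hbmem
        omega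
      have step : ∀ (l : List (Perm (Fin d))) (hs : ∀ τ ∈ l, Equiv.Perm.IsSwap τ)
          (hp : l.Pairwise (fun a b => a.support.max < b.support.max))
          (hprod : l.prod = σ),
          ∃ hl : l ≠ [], l.getLast hl = Equiv.swap a b ∧ l.dropLast.prod = σ' := by
        intro l hs hp hprod
        have hl : l ≠ [] := by
          intro h
          rw [h] at hprod
          exact h1 (by simpa using hprod.symm)
        obtain ⟨a', b', hab', hlast, hpb, hpa, hmax', hdrop⟩ := struct hs hp hl
        rw [hprod] at hpb hpa hmax' hdrop
        have hbb : b' = b := by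
          have := hmax'.symm.trans hmax_eq
          exact_mod_cast this
        subst hbb
        have haa : a' = a := by rw [hadef, ← hpa]; exact (Equiv.symm_apply_apply σ a').symm
        subst haa
        exact ⟨hl, hlast, hdrop⟩
      obtain ⟨hl1, hlast1, hdrop1⟩ := step l₁ hs1 hp1 hprod1
      obtain ⟨hl2, hlast2, hdrop2⟩ := step l₂ hs2 hp2 hprod2
      have hdl : l₁.dropLast = l₂.dropLast := by
        apply ih b hblt σ' hmsr'
        · exact ⟨fun τ h => hs1 τ ((List.dropLast_sublist l₁).subset h),
            hp1.sublist (List.dropLast_sublist l₁), hdrop1⟩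
        · exact ⟨fun τ h => hs2 τ ((List.dropLast_sublist l₂).subset h),
            hp2.sublist (List.dropLast_sublist l₂), hdrop2⟩
      calc l₁ = l₁.dropLast ++ [l₁.getLast hl1] := (List.dropLast_append_getLast hl1).symm
        _ = l₂.dropLast ++ [l₂.getLast hl2] := by rw [hdl, hlast1, hlast2]
        _ = l₂ := List.dropLast_append_getLast hl2

lemma exists_unique_fact (σ : Perm (Fin d)) :
    ∃! l : List (Perm (Fin d)),
      (∀ τ ∈ l, Equiv.Perm.IsSwap τ) ∧
      l.Pairwise (fun a b => a.support.max < b.support.max) ∧ l.prod = σ := by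
  obtain ⟨l, h1, h2, h3, _, _⟩ := exists_fact (msr σ) σ le_rfl
  exact ⟨l, ⟨h1, h2, h3⟩, fun l' h' => unique_fact (msr σ) σ le_rfl l' l h' ⟨h1, h2, h3⟩⟩

lemma length_fact {l : List (Perm (Fin d))} (hs : ∀ τ ∈ l, Equiv.Perm.IsSwap τ)
    (hp : l.Pairwise (fun a b => a.support.max < b.support.max)) :
    l.length + (fullCycleType l.prod).card = d := by
  obtain ⟨l₀, h1, h2, h3, _, hlen⟩ := exists_fact (msr l.prod) l.prod le_rfl
  have : l = l₀ := unique_fact (msr l.prod) l.prod le_rfl l l₀ ⟨hs, hp, rfl⟩ ⟨h1, h2, h3⟩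
  rw [this, ← h3] at *
  rw [this]
  exact hlen

end HurwitzAux

namespace HurwitzAux

open Equiv.Perm

variable {d : ℕ}

noncomputable def mfact (σ : Perm (Fin d)) : List (Perm (Fin d)) :=
  (exists_unique_fact σ).exists.choose

lemma mfact_spec (σ : Perm (Fin d)) :
    (∀ τ ∈ mfact σ, Equiv.Perm.IsSwap τ) ∧
    (mfact σ).Pairwise (fun a b => a.support.max < b.support.max) ∧ (mfact σ).prod = σ :=
  (exists_unique_fact σ).exists.choose_spec

lemma mfact_unique {σ : Perm (Fin d)} {l : List (Perm (Fin d))}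
    (h : (∀ τ ∈ l, Equiv.Perm.IsSwap τ) ∧
      l.Pairwise (fun a b => a.support.max < b.support.max) ∧ l.prod = σ) :
    l = mfact σ :=
  (exists_unique_fact σ).unique h (mfact_spec σ)

lemma ofFn_swaps {r : ℕ} {f : Fin r → Perm (Fin d)} (hs : ∀ i, (f i).IsSwap) :
    ∀ τ ∈ List.ofFn f, Equiv.Perm.IsSwap τ := by
  intro τ hτ
  rw [List.mem_ofFn] at hτ
  obtain ⟨i, rfl⟩ := hτ
  exact hs i

lemma ofFn_pair {r : ℕ} {f : Fin r → Perm (Fin d)}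
    (hm : ∀ i j : Fin r, i < j → (f i).support.max < (f j).support.max) :
    (List.ofFn f).Pairwise (fun a b => a.support.max < b.support.max) :=
  List.pairwise_ofFn.mpr fun i j h => hm i j h

lemma len_ofFn {r : ℕ} {f : Fin r → Perm (Fin d)} (hs : ∀ i, (f i).IsSwap)
    (hm : ∀ i j : Fin r, i < j → (f i).support.max < (f j).support.max) :
    r + (fullCycleType (List.ofFn f).prod).card = d := by
  have := length_fact (ofFn_swaps hs) (ofFn_pair hm)
  simpa using this

noncomputable def tupleEquiv (r : ℕ) (lam nu : Nat.Partition d) :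
    (strictMonotoneTuples r lam nu) ≃
    {t : Perm (Fin d) × Perm (Fin d) × Perm (Fin d) //
      fullCycleType t.1 = lam.parts ∧ fullCycleType t.2.2 = nu.parts ∧
      d - (fullCycleType t.2.1).card = r ∧ (fullCycleType t.2.1).card = d - r ∧
      t.1 * t.2.1 * t.2.2 = 1} where
  toFun t := ⟨(t.1.1, (List.ofFn t.1.2.1).prod, t.1.2.2), by
    obtain ⟨h1, h2, h3, h4, h5⟩ := t.2
    have hkey := len_ofFn h3 h4
    refine ⟨h1, h2, ?_, ?_, h5⟩ <;> dsimp only <;> omega⟩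
  invFun t := ⟨(t.1.1, fun i : Fin r => (mfact t.1.2.1).getD i 1, t.1.2.2), by
    obtain ⟨h1, h2, h3, h4, h5⟩ := t.2
    try dsimp only at h3 h4
    simp only [strictMonotoneTuples, Set.mem_setOf_eq]
    obtain ⟨hs, hp, hprod⟩ := mfact_spec t.1.2.1
    have hlen : (mfact t.1.2.1).length + (fullCycleType t.1.2.1).card = d := by
      have := length_fact hs hp
      rwa [hprod] at this
    have hlr : (mfact t.1.2.1).length = r := by omega
    have hofn : List.ofFn (fun i : Fin r => (mfact t.1.2.1).getD i 1) = mfact t.1.2.1 := by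
      apply List.ext_getElem (by simp [hlr])
      intro i hi1 hi2
      rw [List.getElem_ofFn]
      exact List.getD_eq_getElem _ _ hi2
    refine ⟨h1, h2, ?_, ?_, ?_⟩
    · intro i
      have hi : (i : ℕ) < (mfact t.1.2.1).length := by omega
      rw [List.getD_eq_getElem _ _ hi]
      exact hs _ (List.getElem_mem hi)
    · intro i j hij
      have hi : (i : ℕ) < (mfact t.1.2.1).length := by omega
      have hj : (j : ℕ) < (mfact t.1.2.1).length := by omega
      rw [List.getD_eq_getElem _ _ hi, List.getD_eq_getElem _ _ hj]
      exact List.pairwise_iff_getElem.mp hp i j hi hj hij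
    · rw [hofn, hprod]
      exact h5⟩
  left_inv t := by
    obtain ⟨⟨al, f, be⟩, h⟩ := t
    obtain ⟨h1, h2, h3, h4, h5⟩ := h
    have hm : List.ofFn f = mfact ((List.ofFn f).prod) :=
      mfact_unique ⟨ofFn_swaps h3, ofFn_pair h4, rfl⟩
    have hfe : (fun i : Fin r => (List.ofFn f).getD i 1) = f := by
      funext i
      have hi : (i : ℕ) < (List.ofFn f).length := by simp
      rw [List.getD_eq_getElem _ _ hi, List.getElem_ofFn]
    apply Subtype.ext
    show (al, fun i : Fin r => (mfact ((List.ofFn f).prod)).getD i 1, be) = (al, f, be)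
    rw [← hm, hfe]
  right_inv t := by
    obtain ⟨⟨al, psi, be⟩, h⟩ := t
    obtain ⟨h1, h2, h3, h4, h5⟩ := h
    try dsimp only at h3 h4
    obtain ⟨hs, hp, hprod⟩ := mfact_spec psi
    have hlen : (mfact psi).length + (fullCycleType psi).card = d := by
      have := length_fact hs hp
      rwa [hprod] at this
    have hlr : (mfact psi).length = r := by omega
    have hofn : List.ofFn (fun i : Fin r => (mfact psi).getD i 1) = mfact psi := by
      apply List.ext_getElem (by simp [hlr])
      intro i hi1 hi2
      rw [List.getElem_ofFn]
      exact List.getD_eq_getElem _ _ hi2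
    apply Subtype.ext
    show (al, (List.ofFn fun i : Fin r => (mfact psi).getD i 1).prod, be) = (al, psi, be)
    rw [hofn, hprod]

end HurwitzAux

/-- Every permutation of `[d]` is uniquely a product of transpositions along a strictly
monotone sequence; consequently `H^<_r(λ,ν) = H^|_r(λ,ν)`. -/
theorem strictly_monotone_factorization_unique_and_Hlt_eq_Hfree (d : ℕ) :
    (∀ σ : Equiv.Perm (Fin d),
      ∃! l : List (Equiv.Perm (Fin d)),
        (∀ τ ∈ l, Equiv.Perm.IsSwap τ) ∧
        l.Pairwise (fun a b => a.support.max < b.support.max) ∧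
        l.prod = σ) ∧
    ∀ (r : ℕ) (lam nu : Nat.Partition d), Hlt r lam nu = Hfree r lam nu := by
  constructor
  · exact fun σ => HurwitzAux.exists_unique_fact σ
  · intro r lam nu
    unfold Hlt Hfree
    rw [Nat.card_congr (HurwitzAux.tupleEquiv r lam nu)]
end
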